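/- arXiv:1601.00399 — 4 statements merged into one kernel-verified Lean document; each statement's English description precedes it below -/
import Mathlib

section
/- Marginals from the MRA decomposition: Let A ⊆ [n] with |A| ≥ 2, F ∈ L(Γ(A)), and suppose F = Σ_{B∈P̄(A)} φ_A X_B with X_B ∈ H_B for each B ∈ P̄(A). Then for every A' ⊆ A with |A'| ≥ 2, the marginal satisfies M_{A'}F = Σ_{B∈P̄(A')} φ_{A'} X_B. -/
open Finset
open scoped List

abbrev Word (n : ℕ) := List (Fin n)

/-- `Γ(A)`: duplicate-free words whose set of letters is exactly `A`. -/
noncomputable def rankings (n : ℕ) (A : Finset (Fin n)) : Finset (Word n) :=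
  A.toList.permutations.toFinset

/-- All duplicate-free words on `[n]`. -/
noncomputable def allWords (n : ℕ) : Finset (Word n) :=
  Finset.univ.biUnion fun A : Finset (Fin n) => rankings n A

def IsRanking {n : ℕ} (A : Finset (Fin n)) (w : Word n) : Prop :=
  w.Nodup ∧ w.toFinset = A

instance {n : ℕ} (A : Finset (Fin n)) (w : Word n) : Decidable (IsRanking A w) :=
  inferInstanceAs (Decidable (w.Nodup ∧ w.toFinset = A))

/-- Membership in `L(Γ(A))`: functions supported on `Γ(A)`. -/
def MemL {n : ℕ} (A : Finset (Fin n)) (F : Word n → ℝ) : Prop :=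
  ∀ w, F w ≠ 0 → IsRanking A w

/-- Marginal operator `M_B` (with the convention `M_∅ F = (Σ F)·δ_0̄`). -/
noncomputable def marg {n : ℕ} (B : Finset (Fin n)) (F : Word n → ℝ) : Word n → ℝ :=
  fun π => if IsRanking B π then ∑ σ ∈ allWords n, (if π <+ σ then F σ else 0) else 0

/-- Membership in the localization space `H_B` (for `B = ∅` this is `L(Γ(∅)) = ℝ·δ_0̄`). -/
def MemH {n : ℕ} (B : Finset (Fin n)) (F : Word n → ℝ) : Prop :=
  MemL B F ∧
    (∀ B' : Finset (Fin n), B' ⊂ B → 2 ≤ B'.card → marg B' F = 0) ∧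
    (2 ≤ B.card → ∑ π ∈ rankings n B, F π = 0)

/-- `P̄(A) = {B ⊆ A : |B| ≥ 2} ∪ {∅}`. -/
def Pbar {n : ℕ} (A : Finset (Fin n)) : Finset (Finset (Fin n)) :=
  A.powerset.filter fun B => 2 ≤ B.card ∨ B = ∅

/-- Synthesis operator `φ_A`. -/
noncomputable def synth {n : ℕ} (A : Finset (Fin n)) (F : Word n → ℝ) : Word n → ℝ :=
  fun σ =>
    if IsRanking A σ then
      F [] / (Nat.factorial A.card : ℝ) +
        ∑ π ∈ allWords n,
          (if π ≠ [] ∧ π <:+: σ then F π / (Nat.factorial (A.card - π.length + 1) : ℝ) else 0)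
    else 0

/-- Dirac function `δ_π`. -/
noncomputable def dirac {n : ℕ} (π : Word n) : Word n → ℝ :=
  fun w => if w = π then 1 else 0

/-- `σ|_C`: the induced word of `σ` on `C`. -/
def restrictWord {n : ℕ} (σ : Word n) (C : Finset (Fin n)) : Word n :=
  σ.filter fun a => decide (a ∈ C)

section Helpers
variable {n : ℕ}

lemma mem_rankings {A : Finset (Fin n)} {w : Word n} :
    w ∈ rankings n A ↔ IsRanking A w := by
  simp only [rankings, List.mem_toFinset, List.mem_permutations, IsRanking]
  constructor
  · intro h
    refine ⟨h.nodup_iff.2 (Finset.nodup_toList A), ?_⟩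
    ext x
    simp [h.mem_iff]
  · rintro ⟨hnd, rfl⟩
    refine (List.perm_ext_iff_of_nodup hnd (Finset.nodup_toList _)).2 fun x => ?_
    simp [List.mem_toFinset]

lemma mem_allWords {w : Word n} : w ∈ allWords n ↔ w.Nodup := by
  simp only [allWords, Finset.mem_biUnion, Finset.mem_univ, true_and, mem_rankings]
  constructor
  · rintro ⟨A, hA⟩; exact hA.1
  · intro h; exact ⟨w.toFinset, h, rfl⟩

lemma IsRanking.length {A : Finset (Fin n)} {w : Word n} (h : IsRanking A w) :
    w.length = A.card := by
  rw [← h.2, List.toFinset_card_of_nodup h.1]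

lemma IsRanking.mem_allWords' {A : Finset (Fin n)} {w : Word n} (h : IsRanking A w) :
    w ∈ allWords n := mem_allWords.2 h.1

/-- A sum over `allWords` of a function supported on `Γ(A)` is a sum over `rankings n A`. -/
lemma sum_allWords_of_support {A : Finset (Fin n)} {f : Word n → ℝ}
    (hf : ∀ w, f w ≠ 0 → IsRanking A w) :
    ∑ w ∈ allWords n, f w = ∑ w ∈ rankings n A, f w := by
  refine (Finset.sum_subset (fun w hw => (mem_rankings.1 hw).mem_allWords') ?_).symm
  intro w _ hw
  by_contra h
  exact hw (mem_rankings.2 (hf w h))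

end Helpers

section ListCore
variable {α : Type*} [DecidableEq α]

lemma sublist_erase_of_not_mem {l l' : List α} {a : α} (h : l <+ l') (hnd : l'.Nodup)
    (ha : a ∉ l) : l <+ l'.erase a := by
  rw [hnd.erase_eq_filter]
  have h2 : l.filter (· != a) = l := by
    rw [List.filter_eq_self]
    intro b hb
    simp only [bne_iff_ne, ne_eq]
    exact fun hba => ha (hba ▸ hb)
  exact h2 ▸ h.filter _

/-- unique occurrence of a nonempty word inside a duplicate-free word -/
lemma nodup_decomp_unique {l τ s t s' t' : List α} (hnd : l.Nodup) (hτ : τ ≠ [])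
    (h1 : l = s ++ (τ ++ t)) (h2 : l = s' ++ (τ ++ t')) : s = s' ∧ t = t' := by
  obtain ⟨b, τ', rfl⟩ := List.exists_cons_of_ne_nil hτ
  have hb1 : b ∉ s := fun hb =>
    (List.disjoint_of_nodup_append (h1 ▸ hnd)) hb (by simp)
  have hb2 : b ∉ s' := fun hb =>
    (List.disjoint_of_nodup_append (h2 ▸ hnd)) hb (by simp)
  have e1 : l.idxOf b = s.length := by
    rw [h1, List.idxOf_append_of_notMem hb1, List.cons_append,
      List.idxOf_cons_self, Nat.add_zero]
  have e2 : l.idxOf b = s'.length := by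
    rw [h2, List.idxOf_append_of_notMem hb2, List.cons_append,
      List.idxOf_cons_self, Nat.add_zero]
  have hlen : s.length = s'.length := by rw [← e1, ← e2]
  obtain ⟨hs, hrest⟩ := List.append_inj (h1.symm.trans h2) hlen
  exact ⟨hs, by simpa using hrest⟩

lemma eq_of_append_cons_eq {u v p q : List α} {a : α} (hu : a ∉ u) (hp : a ∉ p)
    (h : u ++ a :: v = p ++ a :: q) : u = p ∧ v = q := by
  have e1 : (u ++ a :: v).idxOf a = u.length := by
    rw [List.idxOf_append_of_notMem hu, List.idxOf_cons_self, Nat.add_zero]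
  have e2 : (p ++ a :: q).idxOf a = p.length := by
    rw [List.idxOf_append_of_notMem hp, List.idxOf_cons_self, Nat.add_zero]
  obtain ⟨h1, h2⟩ := List.append_inj h (by rw [← e1, ← e2, h])
  exact ⟨h1, by simpa using h2⟩

lemma infix_take_iff {l τ s t : List α} (hnd : l.Nodup) (hτ : τ ≠ [])
    (hdec : l = s ++ (τ ++ t)) {j : ℕ} (hj : j ≤ l.length) :
    τ <:+: l.take j ↔ s.length + τ.length ≤ j := by
  constructor
  · rintro ⟨s₁, t₁, h⟩
    have hl : l = s₁ ++ (τ ++ (t₁ ++ l.drop j)) := by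
      conv_lhs => rw [← List.take_append_drop j l, ← h]
      simp [List.append_assoc]
    obtain ⟨hs, _⟩ := nodup_decomp_unique hnd hτ hl hdec
    have hs' : s₁.length = s.length := by rw [hs]
    have hlen : j = s₁.length + τ.length + t₁.length := by
      have := congrArg List.length h
      simp [Nat.min_eq_left hj] at this
      omega
    omega
  · intro h
    refine ⟨s, t.take (j - (s.length + τ.length)), ?_⟩
    have : l.take j = (s ++ τ) ++ t.take (j - (s.length + τ.length)) := by
      rw [hdec, ← List.append_assoc, List.take_append,
        List.take_of_length_le (by simp; omega)]
      simp
    rw [this, List.append_assoc]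

lemma infix_drop_iff {l τ s t : List α} (hnd : l.Nodup) (hτ : τ ≠ [])
    (hdec : l = s ++ (τ ++ t)) {j : ℕ} (hj : j ≤ l.length) :
    τ <:+: l.drop j ↔ j ≤ s.length := by
  constructor
  · rintro ⟨s₁, t₁, h⟩
    have hl : l = (l.take j ++ s₁) ++ (τ ++ t₁) := by
      conv_lhs => rw [← List.take_append_drop j l, ← h]
      simp [List.append_assoc]
    obtain ⟨hs, _⟩ := nodup_decomp_unique hnd hτ hl hdec
    have : (l.take j).length = j := by simp [Nat.min_eq_left hj]
    have := congrArg List.length hs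
    simp [List.length_append] at this
    omega
  · intro h
    refine ⟨s.drop j, t, ?_⟩
    have : l.drop j = s.drop j ++ (τ ++ t) := by
      rw [hdec, List.drop_append, Nat.sub_eq_zero_of_le h, List.drop_zero]
    rw [this, List.append_assoc]

end ListCore

section ListMiddle
variable {α : Type*} [DecidableEq α]

lemma infix_middle_iff {u v τ : List α} {a : α} (hnd : (u ++ a :: v).Nodup)
    (ha : a ∉ τ) : τ <:+: u ++ a :: v ↔ τ <:+: u ∨ τ <:+: v := by
  have hu : a ∉ u := fun h => (List.disjoint_of_nodup_append hnd) h (by simp)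
  constructor
  · rintro ⟨s₁, t₁, h⟩
    have hmem : a ∈ s₁ ∨ a ∈ t₁ := by
      have : a ∈ s₁ ++ τ ++ t₁ := by rw [h]; simp
      simp only [List.mem_append] at this
      tauto
    rcases hmem with hm | hm
    · obtain ⟨p, q, rfl⟩ := List.append_of_mem hm
      have h' : p ++ a :: (q ++ (τ ++ t₁)) = u ++ a :: v := by rw [← h]; simp
      have hnd' : (p ++ a :: (q ++ (τ ++ t₁))).Nodup := by rw [h']; exact hnd
      have hp : a ∉ p := fun hh => (List.disjoint_of_nodup_append hnd') hh (by simp)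
      obtain ⟨_, h2⟩ := eq_of_append_cons_eq hp hu h'
      exact Or.inr ⟨q, t₁, by rw [List.append_assoc]; exact h2⟩
    · obtain ⟨p, q, rfl⟩ := List.append_of_mem hm
      have h' : (s₁ ++ (τ ++ p)) ++ a :: q = u ++ a :: v := by rw [← h]; simp
      have hnd' : ((s₁ ++ (τ ++ p)) ++ a :: q).Nodup := by rw [h']; exact hnd
      have hp : a ∉ s₁ ++ (τ ++ p) := fun hh =>
        (List.disjoint_of_nodup_append hnd') hh (by simp)
      obtain ⟨h1, _⟩ := eq_of_append_cons_eq hp hu h'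
      exact Or.inl ⟨s₁, p, by rw [List.append_assoc]; exact h1⟩
  · rintro (⟨s₁, t₁, h⟩ | ⟨s₁, t₁, h⟩)
    · exact ⟨s₁, t₁ ++ a :: v, by rw [← h]; simp⟩
    · exact ⟨u ++ a :: s₁, t₁, by rw [← h]; simp⟩

lemma infix_cons_middle_iff {u v al be : List α} {a : α} (hnd : (u ++ a :: v).Nodup)
    (hα : a ∉ al) (hβ : a ∉ be) :
    (al ++ a :: be) <:+: u ++ a :: v ↔ (al <:+ u ∧ be <+: v) := by
  have hu : a ∉ u := fun h => (List.disjoint_of_nodup_append hnd) h (by simp)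
  constructor
  · rintro ⟨s₁, t₁, h⟩
    have h' : (s₁ ++ al) ++ a :: (be ++ t₁) = u ++ a :: v := by rw [← h]; simp
    have hnd' : ((s₁ ++ al) ++ a :: (be ++ t₁)).Nodup := by rw [h']; exact hnd
    have hp : a ∉ s₁ ++ al := fun hh =>
      (List.disjoint_of_nodup_append hnd') hh (by simp)
    obtain ⟨h1, h2⟩ := eq_of_append_cons_eq hp hu h'
    exact ⟨⟨s₁, h1⟩, ⟨t₁, h2⟩⟩
  · rintro ⟨⟨s₁, h1⟩, ⟨t₁, h2⟩⟩
    exact ⟨s₁, t₁, by rw [← h1, ← h2]; simp⟩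

end ListMiddle

section Ins
variable {α : Type*} [DecidableEq α]

/-- insertion of `a` into `π` at position `j` -/
def insWord (π : List α) (a : α) (j : ℕ) : List α := π.take j ++ a :: π.drop j

lemma insWord_perm (π : List α) (a : α) (j : ℕ) : insWord π a j ~ a :: π := by
  have := List.perm_middle (a := a) (l₁ := π.take j) (l₂ := π.drop j)
  rwa [List.take_append_drop] at this

lemma insWord_nodup {π : List α} {a : α} (hnd : π.Nodup) (ha : a ∉ π) (j : ℕ) :
    (insWord π a j).Nodup :=
  (insWord_perm π a j).nodup_iff.2 (List.nodup_cons.2 ⟨ha, hnd⟩)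

lemma mem_insWord {π : List α} {a : α} {j : ℕ} {x : α} :
    x ∈ insWord π a j ↔ x = a ∨ x ∈ π := by
  rw [(insWord_perm π a j).mem_iff]; simp

lemma sublist_insWord (π : List α) (a : α) (j : ℕ) : π <+ insWord π a j := by
  conv_lhs => rw [← List.take_append_drop j π]
  exact (List.Sublist.refl _).append (List.sublist_cons_self a _)

lemma indexOf_insWord {π : List α} {a : α} (ha : a ∉ π) {j : ℕ} (hj : j ≤ π.length) :
    (insWord π a j).idxOf a = j := by
  have h1 : a ∉ π.take j := fun h => ha (List.mem_of_mem_take h)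
  rw [insWord, List.idxOf_append_of_notMem h1, List.idxOf_cons_self,
    Nat.add_zero, List.length_take, Nat.min_eq_left hj]

lemma exists_insWord {π σ : List α} {a : α} (hndσ : σ.Nodup) (ha : a ∉ π) (haσ : a ∈ σ)
    (hlen : σ.length = π.length + 1) (hsub : π <+ σ) :
    ∃ j ≤ π.length, σ = insWord π a j := by
  obtain ⟨u, v, rfl⟩ := List.append_of_mem haσ
  have hu : a ∉ u := fun h => (List.disjoint_of_nodup_append hndσ) h (by simp)
  have hsub2 : π <+ u ++ v := by
    have h2 : π <+ (u ++ a :: v).erase a := sublist_erase_of_not_mem hsub hndσ ha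
    rwa [List.erase_append_right _ hu, List.erase_cons_head] at h2
  have hπ : π = u ++ v := by
    refine (hsub2.eq_of_length ?_).symm.symm
    simp only [List.length_append, List.length_cons] at hlen ⊢
    omega
  refine ⟨u.length, by rw [hπ]; simp, ?_⟩
  rw [insWord, hπ, List.take_left, List.drop_left]

lemma count_insWord_notmem {π τ : List α} {a : α} (hnd : π.Nodup) (ha : a ∉ π)
    (hτ : τ ≠ []) (haτ : a ∉ τ) :
    ((Finset.range (π.length + 1)).filter fun j => τ <:+: insWord π a j).card
      = if τ <:+: π then π.length + 2 - τ.length else 0 := by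
  have key : ∀ j, τ <:+: insWord π a j ↔ τ <:+: π.take j ∨ τ <:+: π.drop j :=
    fun j => infix_middle_iff (insWord_nodup hnd ha j) haτ
  by_cases h : τ <:+: π
  · obtain ⟨s, t, hdec⟩ := h
    have hdec' : π = s ++ (τ ++ t) := by rw [← hdec, List.append_assoc]
    have hst : s.length + τ.length + t.length = π.length := by
      have := congrArg List.length hdec
      simp only [List.length_append] at this
      omega
    have hτl : 1 ≤ τ.length := List.length_pos_iff.2 hτ
    rw [if_pos ⟨s, t, hdec⟩]
    have e1 : (Finset.range (π.length + 1)).filter (fun j => τ <:+: insWord π a j)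
        = (Finset.range (π.length + 1)).filter
            (fun j => j ≤ s.length ∨ s.length + τ.length ≤ j) := by
      apply Finset.filter_congr
      intro j hj
      simp only [Finset.mem_range] at hj
      have hj' : j ≤ π.length := by omega
      rw [key j, infix_drop_iff hnd hτ hdec' hj', infix_take_iff hnd hτ hdec' hj']
      exact or_comm
    have e2 : (Finset.range (π.length + 1)).filter
          (fun j => j ≤ s.length ∨ s.length + τ.length ≤ j)
        = Finset.range (π.length + 1) \ Finset.Ico (s.length + 1) (s.length + τ.length) := by
      ext j
      simp only [Finset.mem_filter, Finset.mem_sdiff, Finset.mem_Ico, Finset.mem_range]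
      omega
    rw [e1, e2, Finset.card_sdiff_of_subset (by
      intro j hj
      simp only [Finset.mem_Ico] at hj
      simp only [Finset.mem_range]
      omega)]
    rw [Finset.card_range, Nat.card_Ico]
    omega
  · rw [if_neg h, Finset.card_eq_zero, Finset.filter_eq_empty_iff]
    intro j hj
    rw [key j]
    rintro (hh | hh)
    · exact h (hh.trans (List.take_prefix j π).isInfix)
    · exact h (hh.trans (List.drop_suffix j π).isInfix)

lemma count_insWord_mem {π al be : List α} {a : α} (hnd : π.Nodup) (ha : a ∉ π)
    (hα : a ∉ al) (hβ : a ∉ be) (hne : al ++ be ≠ []) :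
    ((Finset.range (π.length + 1)).filter fun j => (al ++ a :: be) <:+: insWord π a j).card
      = if (al ++ be) <:+: π then 1 else 0 := by
  have key : ∀ j, (al ++ a :: be) <:+: insWord π a j ↔ al <:+ π.take j ∧ be <+: π.drop j :=
    fun j => infix_cons_middle_iff (insWord_nodup hnd ha j) hα hβ
  by_cases h : (al ++ be) <:+: π
  · rw [if_pos h]
    obtain ⟨s, t, hdec⟩ := h
    have hdec' : π = s ++ ((al ++ be) ++ t) := by rw [← hdec, List.append_assoc]
    have hlen : s.length + al.length + be.length + t.length = π.length := by
      have := congrArg List.length hdec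
      simp only [List.length_append] at this
      omega
    have e0 : (Finset.range (π.length + 1)).filter
          (fun j => (al ++ a :: be) <:+: insWord π a j) = {s.length + al.length} := by
      ext j
      simp only [Finset.mem_filter, Finset.mem_range, Finset.mem_singleton]
      constructor
      · rintro ⟨hj, hcond⟩
        rw [key j] at hcond
        obtain ⟨⟨s₁, h1⟩, ⟨t₁, h2⟩⟩ := hcond
        have hπ2 : π = s₁ ++ ((al ++ be) ++ t₁) := by
          conv_lhs => rw [← List.take_append_drop j π, ← h1, ← h2]
          simp
        obtain ⟨hs, _⟩ := nodup_decomp_unique hnd hne hπ2 hdec'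
        have es : s₁.length = s.length := by rw [hs]
        have := congrArg List.length h1
        simp only [List.length_append, List.length_take] at this
        omega
      · rintro rfl
        have hsal : π = (s ++ al) ++ (be ++ t) := by rw [hdec']; simp
        refine ⟨by omega, ?_⟩
        rw [key _]
        constructor
        · refine ⟨s, ?_⟩
          rw [hsal]
          have e : s.length + al.length = (s ++ al).length := by simp
          rw [e, List.take_left]
        · refine ⟨t, ?_⟩
          rw [hsal, List.drop_left' (by simp)]
    rw [e0, Finset.card_singleton]
  · rw [if_neg h, Finset.card_eq_zero, Finset.filter_eq_empty_iff]
    intro j hj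
    rw [key j]
    rintro ⟨⟨s₁, h1⟩, ⟨t₁, h2⟩⟩
    refine h ⟨s₁, t₁, ?_⟩
    conv_rhs => rw [← List.take_append_drop j π, ← h1, ← h2]
    simp

end Ins

section MargBasic
variable {n : ℕ}

lemma marg_memL (B : Finset (Fin n)) (F : Word n → ℝ) : MemL B (marg B F) := by
  intro w hw
  by_contra h
  simp [marg, h] at hw

lemma synth_memL (A : Finset (Fin n)) (F : Word n → ℝ) : MemL A (synth A F) := by
  intro w hw
  by_contra h
  simp [synth, h] at hw

lemma marg_apply_support {A B : Finset (Fin n)} {F : Word n → ℝ} (hF : MemL A F)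
    {π : Word n} (hπ : IsRanking B π) :
    marg B F π = ∑ σ ∈ rankings n A, (if π <+ σ then F σ else 0) := by
  rw [marg, if_pos hπ]
  refine sum_allWords_of_support fun w hw => ?_
  refine hF w ?_
  intro h0
  rw [h0] at hw
  simp at hw

lemma marg_self {A : Finset (Fin n)} {F : Word n → ℝ} (hF : MemL A F) :
    marg A F = F := by
  funext π
  by_cases hπ : IsRanking A π
  · rw [marg_apply_support hF hπ]
    rw [Finset.sum_eq_single_of_mem π (mem_rankings.2 hπ)]
    · rw [if_pos (List.Sublist.refl π)]
    · intro σ hσ hne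
      rw [if_neg]
      intro hsub
      exact hne (hsub.eq_of_length (by
        rw [hπ.length, (mem_rankings.1 hσ).length])).symm
  · rw [marg, if_neg hπ]
    by_contra h
    exact hπ (hF π fun h0 => h (h0 ▸ rfl))

lemma marg_sum {B : Finset (Fin n)} {ι : Type*} {s : Finset ι} {F : ι → Word n → ℝ} :
    marg B (∑ i ∈ s, F i) = ∑ i ∈ s, marg B (F i) := by
  funext π
  rw [Finset.sum_apply]
  simp only [marg]
  split
  · rw [Finset.sum_comm]
    refine Finset.sum_congr rfl fun σ _ => ?_
    rw [Finset.sum_apply]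
    split <;> simp
  · simp

lemma restrict_isRanking {A' : Finset (Fin n)} {σ : Word n} (hσ : σ.Nodup)
    (hA' : A' ⊆ σ.toFinset) :
    IsRanking A' (σ.filter (fun x => decide (x ∈ A'))) := by
  refine ⟨hσ.filter _, ?_⟩
  ext x
  simp only [List.mem_toFinset, List.mem_filter, decide_eq_true_eq]
  exact ⟨fun h => h.2, fun h => ⟨List.mem_toFinset.1 (hA' h), h⟩⟩

lemma ranking_sublist_eq_restrict {A' : Finset (Fin n)} {σ ρ : Word n} (hσ : σ.Nodup)
    (hA' : A' ⊆ σ.toFinset) (hρ : IsRanking A' ρ) (hsub : ρ <+ σ) :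
    ρ = σ.filter (fun x => decide (x ∈ A')) := by
  have h1 : ρ.filter (fun x => decide (x ∈ A')) = ρ :=
    List.filter_eq_self.2 fun b hb => by
      simp only [decide_eq_true_eq]
      rw [← hρ.2]
      exact List.mem_toFinset.2 hb
  refine (h1 ▸ hsub.filter _).eq_of_length ?_
  rw [hρ.length, (restrict_isRanking hσ hA').length]

lemma sublist_restrict_iff {A' : Finset (Fin n)} {σ π : Word n}
    (hπ : π.toFinset ⊆ A') :
    π <+ σ.filter (fun x => decide (x ∈ A')) ↔ π <+ σ := by
  constructor
  · exact fun h => h.trans (List.filter_sublist (l := σ))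
  · intro h
    have h1 : π.filter (fun x => decide (x ∈ A')) = π :=
      List.filter_eq_self.2 fun b hb => by
        simp only [decide_eq_true_eq]
        exact hπ (List.mem_toFinset.2 hb)
    exact h1 ▸ h.filter _

/-- Tower property of marginals. -/
lemma marg_marg {A A' A'' : Finset (Fin n)} (h1 : A'' ⊆ A') (h2 : A' ⊆ A)
    {F : Word n → ℝ} (hF : MemL A F) : marg A'' (marg A' F) = marg A'' F := by
  funext π
  by_cases hπ : IsRanking A'' π
  swap
  · simp [marg, hπ]
  rw [marg_apply_support (marg_memL A' F) hπ, marg_apply_support hF hπ]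
  have step : ∀ ρ ∈ rankings n A',
      (if π <+ ρ then marg A' F ρ else 0)
        = ∑ σ ∈ rankings n A, (if π <+ ρ ∧ ρ <+ σ then F σ else 0) := by
    intro ρ hρ
    rw [marg_apply_support hF (mem_rankings.1 hρ)]
    split
    · rename_i hc
      refine Finset.sum_congr rfl fun σ _ => ?_
      by_cases hs : ρ <+ σ
      · rw [if_pos hs, if_pos ⟨hc, hs⟩]
      · rw [if_neg hs, if_neg fun hand => hs hand.2]
    · rename_i hc
      rw [Finset.sum_eq_zero]
      intro σ _
      rw [if_neg (fun hand => hc hand.1)]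
  rw [Finset.sum_congr rfl step, Finset.sum_comm]
  refine Finset.sum_congr rfl fun σ hσ => ?_
  have hσr := mem_rankings.1 hσ
  have hA'σ : A' ⊆ σ.toFinset := hσr.2 ▸ h2
  set ρ₀ := σ.filter (fun x => decide (x ∈ A')) with hρ₀
  have hρ₀r : IsRanking A' ρ₀ := restrict_isRanking hσr.1 hA'σ
  rw [Finset.sum_eq_single_of_mem ρ₀ (mem_rankings.2 hρ₀r)]
  · have e1 : ρ₀ <+ σ := List.filter_sublist (l := σ)
    have e2 : π <+ ρ₀ ↔ π <+ σ := sublist_restrict_iff (hπ.2 ▸ h1)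
    by_cases hc : π <+ σ
    · rw [if_pos ⟨e2.2 hc, e1⟩, if_pos hc]
    · rw [if_neg (fun hand => hc (e2.1 hand.1)), if_neg hc]
  · intro ρ hρ hne
    rw [if_neg]
    rintro ⟨_, hsub⟩
    exact hne (ranking_sublist_eq_restrict hσr.1 hA'σ (mem_rankings.1 hρ) hsub)

end MargBasic

section Synth
variable {n : ℕ}

lemma sum_insertions {A' : Finset (Fin n)} {a : Fin n} (ha : a ∉ A') {π : Word n}
    (hπ : IsRanking A' π) (h : Word n → ℝ) :
    ∑ σ ∈ rankings n (insert a A'), (if π <+ σ then h σ else 0)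
      = ∑ j ∈ Finset.range (π.length + 1), h (insWord π a j) := by
  have haπ : a ∉ π := fun hm => ha (hπ.2 ▸ List.mem_toFinset.2 hm)
  rw [← Finset.sum_filter]
  have himg : (rankings n (insert a A')).filter (fun σ => π <+ σ)
      = (Finset.range (π.length + 1)).image (fun j => insWord π a j) := by
    ext σ
    simp only [Finset.mem_filter, Finset.mem_image, Finset.mem_range, mem_rankings]
    constructor
    · rintro ⟨hσ, hsub⟩
      obtain ⟨j, hj, rfl⟩ := exists_insWord hσ.1 haπ
        (List.mem_toFinset.1 (hσ.2 ▸ Finset.mem_insert_self a A'))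
        (by rw [hσ.length, hπ.length, Finset.card_insert_of_notMem ha]) hsub
      exact ⟨j, by omega, rfl⟩
    · rintro ⟨j, hj, rfl⟩
      refine ⟨⟨insWord_nodup hπ.1 haπ j, ?_⟩, sublist_insWord π a j⟩
      ext x
      rw [List.mem_toFinset, mem_insWord, Finset.mem_insert, ← hπ.2, List.mem_toFinset]
  rw [himg, Finset.sum_image]
  intro j hj j' hj' heq
  simp only [Finset.coe_range, Set.mem_Iio, Finset.mem_range, Finset.mem_coe] at hj hj'
  have e1 := indexOf_insWord haπ (j := j) (by omega)
  have e2 := indexOf_insWord haπ (j := j') (by omega)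
  rw [← e1, ← e2, show insWord π a j = insWord π a j' from heq]

lemma ranking_ne_nil {B : Finset (Fin n)} {τ : Word n} (hτ : IsRanking B τ)
    (hB : B ≠ ∅) : τ ≠ [] := by
  intro h
  exact hB (by rw [← hτ.2, h]; rfl)

lemma synth_apply {A B : Finset (Fin n)} {X : Word n → ℝ} (h2 : 2 ≤ B.card)
    (hX : MemL B X) {σ : Word n} (hσ : IsRanking A σ) :
    synth A X σ = ∑ τ ∈ rankings n B,
      (if τ <:+: σ then X τ / (Nat.factorial (A.card - B.card + 1) : ℝ) else 0) := by
  have hBne : B ≠ ∅ := by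
    intro h
    rw [h] at h2
    simp at h2
  have hX0 : X [] = 0 := by
    by_contra h0
    exact hBne (by rw [← (hX [] h0).2]; rfl)
  rw [synth, if_pos hσ, hX0, zero_div, zero_add]
  rw [sum_allWords_of_support (A := B) (fun w hw => hX w (by
    intro h0
    rw [h0] at hw
    simp at hw))]
  refine Finset.sum_congr rfl fun τ hτ => ?_
  have hτr := mem_rankings.1 hτ
  have hne : τ ≠ [] := ranking_ne_nil hτr hBne
  by_cases hc : τ <:+: σ
  · rw [if_pos ⟨hne, hc⟩, if_pos hc, hτr.length]
  · rw [if_neg (fun hand => hc hand.2), if_neg hc]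

lemma synth_apply_empty {A : Finset (Fin n)} {X : Word n → ℝ} (hX : MemL ∅ X)
    {σ : Word n} (hσ : IsRanking A σ) :
    synth A X σ = X [] / (Nat.factorial A.card : ℝ) := by
  rw [synth, if_pos hσ]
  rw [Finset.sum_eq_zero, add_zero]
  intro τ _
  split
  · rename_i hc
    have : X τ = 0 := by
      by_contra h0
      have := (hX τ h0).2
      rw [Finset.eq_empty_iff_forall_notMem] at this
      cases τ with
      | nil => exact hc.1 rfl
      | cons b l => exact this b (by simp)
    rw [this, zero_div]
  · rfl

lemma erase_isRanking {B : Finset (Fin n)} {τ : Word n} (hτ : IsRanking B τ)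
    (a : Fin n) : IsRanking (B.erase a) (τ.erase a) := by
  refine ⟨hτ.1.erase a, ?_⟩
  ext x
  rw [List.mem_toFinset, hτ.1.mem_erase_iff, Finset.mem_erase, ← hτ.2,
    List.mem_toFinset]

end Synth

section Step
variable {n : ℕ}

lemma singleton_infix_of_mem {b : Fin n} {π : Word n} (h : b ∈ π) : [b] <:+: π := by
  obtain ⟨s, t, rfl⟩ := List.append_of_mem h
  exact ⟨s, t, by simp⟩

lemma marg_synth_step {A' : Finset (Fin n)} {a : Fin n} (ha : a ∉ A')
    {B : Finset (Fin n)} (hB : B ∈ Pbar (insert a A')) {X : Word n → ℝ} (hX : MemH B X) :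
    marg A' (synth (insert a A') X) = if a ∈ B then 0 else synth A' X := by
  obtain ⟨hXL, hXmarg, hXsum⟩ := hX
  have hBsub : B ⊆ insert a A' := Finset.mem_powerset.1 (Finset.mem_filter.1 hB).1
  have hBcase := (Finset.mem_filter.1 hB).2
  have hcard : (insert a A').card = A'.card + 1 := Finset.card_insert_of_notMem ha
  funext π
  by_cases hπ : IsRanking A' π
  swap
  · rw [marg, if_neg hπ]
    by_cases hab : a ∈ B
    · simp only [if_pos hab, Pi.zero_apply]
    · simp only [if_neg hab, synth, if_neg hπ]
  have haπ : a ∉ π := fun hm => ha (hπ.2 ▸ List.mem_toFinset.2 hm)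
  have hLen : π.length = A'.card := hπ.length
  have hins : ∀ j, IsRanking (insert a A') (insWord π a j) := by
    intro j
    refine ⟨insWord_nodup hπ.1 haπ j, ?_⟩
    ext x
    rw [List.mem_toFinset, mem_insWord, Finset.mem_insert, ← hπ.2, List.mem_toFinset]
  have hmain : marg A' (synth (insert a A') X) π
      = ∑ j ∈ Finset.range (π.length + 1), synth (insert a A') X (insWord π a j) := by
    rw [marg_apply_support (synth_memL _ X) hπ, sum_insertions ha hπ]
  rcases hBcase with h2 | hempty
  swap
  · -- B = ∅
    subst hempty
    have hab : a ∉ (∅ : Finset (Fin n)) := Finset.notMem_empty a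
    simp only [if_neg hab]
    rw [hmain, Finset.sum_congr rfl (fun j _ => synth_apply_empty hXL (hins j)),
      Finset.sum_const, Finset.card_range, synth_apply_empty hXL hπ,
      hcard, hLen, Nat.factorial_succ, nsmul_eq_mul]
    have h0 : (Nat.factorial A'.card : ℝ) ≠ 0 :=
      Nat.cast_ne_zero.2 (Nat.factorial_ne_zero _)
    push_cast
    field_simp
  -- 2 ≤ B.card
  have hBne : B ≠ ∅ := by
    intro h
    rw [h] at h2
    simp at h2
  rw [hmain, Finset.sum_congr rfl (fun j _ => synth_apply h2 hXL (hins j)),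
    Finset.sum_comm]
  by_cases hab : a ∈ B
  · -- a ∈ B : the marginal vanishes
    simp only [if_pos hab, Pi.zero_apply]
    have hstep : ∀ τ ∈ rankings n B,
        (∑ j ∈ Finset.range (π.length + 1),
          if τ <:+: insWord π a j then
            X τ / (Nat.factorial ((insert a A').card - B.card + 1) : ℝ) else 0)
        = (if τ.erase a <:+: π then X τ else 0)
            / (Nat.factorial ((insert a A').card - B.card + 1) : ℝ) := by
      intro τ hτ
      have hτr := mem_rankings.1 hτ
      have haτ : a ∈ τ := by rw [← List.mem_toFinset, hτr.2]; exact hab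
      obtain ⟨al, be, hτdec⟩ := List.append_of_mem haτ
      subst hτdec
      have hndτ : (al ++ a :: be).Nodup := hτr.1
      have hal : a ∉ al := fun h => (List.disjoint_of_nodup_append hndτ) h (by simp)
      have hbe : a ∉ be := (List.nodup_cons.1 hndτ.of_append_right).1
      have herase : (al ++ a :: be).erase a = al ++ be := by
        rw [List.erase_append_right _ hal, List.erase_cons_head]
      have hne2 : al ++ be ≠ [] := by
        intro h0
        have h1 : (al ++ a :: be).length = 1 := by
          rcases List.append_eq_nil_iff.1 h0 with ⟨h0a, h0b⟩
          rw [h0a, h0b]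
          rfl
        rw [hτr.length] at h1
        omega
      have hcnt := count_insWord_mem (a := a) hπ.1 haπ hal hbe hne2
      rw [herase, ← Finset.sum_filter, Finset.sum_const, nsmul_eq_mul, hcnt]
      split
      · push_cast
        ring
      · simp
    rw [Finset.sum_congr rfl hstep, ← Finset.sum_div]
    have hmaps : ∀ τ ∈ rankings n B, τ.erase a ∈ rankings n (B.erase a) :=
      fun τ hτ => mem_rankings.2 (erase_isRanking (mem_rankings.1 hτ) a)
    have hzero : (∑ τ ∈ rankings n B, if τ.erase a <:+: π then X τ else 0) = 0 := by
      by_cases h3 : 2 ≤ (B.erase a).card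
      · rw [← Finset.sum_fiberwise_of_maps_to hmaps]
        refine Finset.sum_eq_zero fun ρ hρ => ?_
        have hρr := mem_rankings.1 hρ
        have haρ : a ∉ ρ := by
          rw [← List.mem_toFinset, hρr.2]
          simp
        rw [Finset.sum_congr rfl (fun τ hτ => by rw [(Finset.mem_filter.1 hτ).2])]
        by_cases hc : ρ <:+: π
        · simp only [if_pos hc]
          have hm0 : marg (B.erase a) X ρ = 0 := by
            rw [hXmarg (B.erase a) (Finset.erase_ssubset hab) h3]
            rfl
          rw [marg_apply_support hXL hρr] at hm0
          rw [← hm0, Finset.sum_filter]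
          refine Finset.sum_congr rfl fun τ hτ => ?_
          have hτr := mem_rankings.1 hτ
          have hiff : τ.erase a = ρ ↔ ρ <+ τ := by
            constructor
            · rintro rfl
              exact List.erase_sublist (a := a) (l := τ)
            · intro hsub
              refine ((sublist_erase_of_not_mem hsub hτr.1 haρ).eq_of_length ?_).symm
              rw [hρr.length, (erase_isRanking hτr a).length]
          exact if_congr hiff rfl rfl
        · simp only [if_neg hc, Finset.sum_const_zero]
      · -- B.card = 2
        have hcond : ∀ τ ∈ rankings n B, τ.erase a <:+: π := by
          intro τ hτ
          have hρr := erase_isRanking (mem_rankings.1 hτ) a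
          have hc1 : (B.erase a).card = 1 := by
            have := Finset.card_erase_of_mem hab
            omega
          have hl1 : (τ.erase a).length = 1 := by rw [hρr.length, hc1]
          obtain ⟨b, hb⟩ := List.length_eq_one_iff.1 hl1
          have hbB : b ∈ B.erase a := by
            rw [← hρr.2, hb]
            simp
          have hbA' : b ∈ A' := by
            rcases Finset.mem_insert.1 (hBsub (Finset.mem_of_mem_erase hbB)) with h | h
            · exact absurd h (Finset.ne_of_mem_erase hbB)
            · exact h
          rw [hb]
          exact singleton_infix_of_mem (by rw [← List.mem_toFinset, hπ.2]; exact hbA')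
        rw [Finset.sum_congr rfl (fun τ hτ => if_pos (hcond τ hτ))]
        exact hXsum h2
    rw [hzero, zero_div]
  · -- a ∉ B
    simp only [if_neg hab]
    have hBsub' : B ⊆ A' := fun x hx =>
      (Finset.mem_insert.1 (hBsub hx)).resolve_left fun e => hab (e ▸ hx)
    have hBA' : B.card ≤ A'.card := Finset.card_le_card hBsub'
    rw [synth_apply h2 hXL hπ]
    refine Finset.sum_congr rfl fun τ hτ => ?_
    have hτr := mem_rankings.1 hτ
    have haτ : a ∉ τ := fun h => hab (by rw [← hτr.2]; exact List.mem_toFinset.2 h)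
    have hne : τ ≠ [] := ranking_ne_nil hτr hBne
    have hcnt := count_insWord_notmem hπ.1 haπ hne haτ
    rw [← Finset.sum_filter, Finset.sum_const, nsmul_eq_mul, hcnt, hcard, hτr.length,
      hLen]
    have e1 : A'.card + 1 - B.card + 1 = (A'.card - B.card) + 2 := by omega
    have e2 : A'.card + 2 - B.card = (A'.card - B.card) + 2 := by omega
    rw [e1, e2]
    set k := A'.card - B.card with hk
    have e3 : A'.card - B.card + 1 = k + 1 := rfl
    rw [e3]
    have hf : (k + 2).factorial = (k + 2) * (k + 1).factorial := Nat.factorial_succ (k + 1)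
    split
    · rw [hf]
      have h0 : ((k + 1).factorial : ℝ) ≠ 0 := Nat.cast_ne_zero.2 (Nat.factorial_ne_zero _)
      push_cast
      field_simp
    · simp

end Step

section Main
variable {n : ℕ}

lemma memL_sum {A : Finset (Fin n)} {ι : Type*} {s : Finset ι} {F : ι → Word n → ℝ}
    (h : ∀ i ∈ s, MemL A (F i)) : MemL A (∑ i ∈ s, F i) := by
  intro w hw
  by_contra hr
  apply hw
  rw [Finset.sum_apply]
  refine Finset.sum_eq_zero fun i hi => ?_
  by_contra h0
  exact hr (h i hi w h0)

lemma Pbar_mono {A₁ A : Finset (Fin n)} (h : A₁ ⊆ A) : Pbar A₁ ⊆ Pbar A := by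
  intro B hB
  simp only [Pbar, Finset.mem_filter, Finset.mem_powerset] at hB ⊢
  exact ⟨hB.1.trans h, hB.2⟩

lemma Pbar_erase {A' : Finset (Fin n)} {a : Fin n} (ha : a ∉ A') :
    Pbar A' = (Pbar (insert a A')).filter (fun B => a ∉ B) := by
  ext B
  simp only [Pbar, Finset.mem_filter, Finset.mem_powerset]
  constructor
  · intro ⟨h1, h2⟩
    exact ⟨⟨h1.trans (Finset.subset_insert a A'), h2⟩, fun hx => ha (h1 hx)⟩
  · intro ⟨⟨h1, h2⟩, h3⟩
    refine ⟨fun x hx => ?_, h2⟩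
    exact (Finset.mem_insert.1 (h1 hx)).resolve_left fun e => h3 (e ▸ hx)

lemma marg_decomp_step {A' : Finset (Fin n)} {a : Fin n} (ha : a ∉ A')
    (X : Finset (Fin n) → Word n → ℝ)
    (hX : ∀ B ∈ Pbar (insert a A'), MemH B (X B)) :
    marg A' (∑ B ∈ Pbar (insert a A'), synth (insert a A') (X B))
      = ∑ B ∈ Pbar A', synth A' (X B) := by
  rw [marg_sum, Finset.sum_congr rfl (fun B hB => marg_synth_step ha hB (hX B hB)),
    Finset.sum_ite, Finset.sum_const, smul_zero, zero_add, Pbar_erase ha]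

lemma main_aux : ∀ (N : ℕ) (A : Finset (Fin n)), A.card ≤ N →
    ∀ (X : Finset (Fin n) → Word n → ℝ), (∀ B ∈ Pbar A, MemH B (X B)) →
    ∀ A', A' ⊆ A → 2 ≤ A'.card →
    marg A' (∑ B ∈ Pbar A, synth A (X B)) = ∑ B ∈ Pbar A', synth A' (X B) := by
  intro N
  induction N with
  | zero =>
    intro A hA0 X hX A' hsub hA'2
    have := Finset.card_le_card hsub
    omega
  | succ N ih =>
    intro A hAN X hX A' hsub hA'2
    by_cases heq : A' = A
    · subst heq
      rw [marg_self (memL_sum fun B _ => synth_memL A' (X B))]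
    · obtain ⟨a, haA, haA'⟩ : ∃ a, a ∈ A ∧ a ∉ A' := by
        by_contra h
        push_neg at h
        exact heq (Finset.Subset.antisymm hsub fun x hx => h x hx)
      set A₁ := A.erase a with hA₁
      have hins : insert a A₁ = A := Finset.insert_erase haA
      have hsub1 : A' ⊆ A₁ := fun x hx =>
        Finset.mem_erase.2 ⟨fun e => haA' (e ▸ hx), hsub hx⟩
      have hXsub : ∀ B ∈ Pbar A₁, MemH B (X B) :=
        fun B hB => hX B (Pbar_mono (Finset.erase_subset a A) hB)
      have hML : MemL A (∑ B ∈ Pbar A, synth A (X B)) :=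
        memL_sum fun B _ => synth_memL A (X B)
      rw [← marg_marg hsub1 (Finset.erase_subset a A) hML]
      have hstep : marg A₁ (∑ B ∈ Pbar A, synth A (X B))
          = ∑ B ∈ Pbar A₁, synth A₁ (X B) := by
        rw [← hins]
        exact marg_decomp_step (Finset.notMem_erase a A) X (by rw [hins]; exact hX)
      rw [hstep]
      exact ih A₁ (by rw [hA₁, Finset.card_erase_of_mem haA]; omega) X hXsub A' hsub1 hA'2

end Main

/-- **Marginals from the MRA decomposition.**
If `F ∈ L(Γ(A))` decomposes as `F = Σ_{B ∈ P̄(A)} φ_A X_B` with `X_B ∈ H_B`, then for every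
`A' ⊆ A` with `|A'| ≥ 2` one has `M_{A'} F = Σ_{B ∈ P̄(A')} φ_{A'} X_B`. -/
theorem marginal_from_decomposition {n : ℕ} (hn : 2 ≤ n)
    (A : Finset (Fin n)) (hA : 2 ≤ A.card)
    (F : Word n → ℝ) (hF : MemL A F)
    (X : Finset (Fin n) → Word n → ℝ)
    (hX : ∀ B ∈ Pbar A, MemH B (X B))
    (hdec : F = ∑ B ∈ Pbar A, synth A (X B))
    (A' : Finset (Fin n)) (hA'A : A' ⊆ A) (hA' : 2 ≤ A'.card) :
    marg A' F = ∑ B ∈ Pbar A', synth A' (X B) := by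
  rw [hdec]
  exact main_aux A.card A le_rfl X hX A' hA'A hA'
end

section
/- Injectivity of the synthesis operator on localization spaces: for every A ⊆ [n] with |A| ≥ 2 and every B ∈ P̄(A), the restriction of φ_A to H_B is injective, i.e. if F ∈ H_B and φ_A F = 0 then F = 0. -/
open Finset
open scoped List

lemma mem_allWords_of_nodup {n : ℕ} (w : Word n) (h : w.Nodup) : w ∈ allWords n := by
  refine Finset.mem_biUnion.mpr ⟨w.toFinset, Finset.mem_univ _, ?_⟩
  simp only [rankings, List.mem_toFinset, List.mem_permutations]
  exact List.perm_of_nodup_nodup_toFinset_eq h (Finset.nodup_toList _) (by simp)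

lemma isRanking_length {n : ℕ} {B : Finset (Fin n)} {π : Word n}
    (h : IsRanking B π) : π.length = B.card := by
  rw [← h.2, List.toFinset_card_of_nodup h.1]

lemma infix_unique {n : ℕ} (B : Finset (Fin n)) (π π₀ t : Word n)
    (hπ : IsRanking B π) (hπ₀ : IsRanking B π₀) (ht : ∀ a ∈ t, a ∉ B)
    (h : π <:+: (π₀ ++ t)) : π = π₀ := by
  obtain ⟨u, v, huv⟩ := h
  have hfil : (u ++ π ++ v).filter (fun a => decide (a ∈ B)) =
      (π₀ ++ t).filter (fun a => decide (a ∈ B)) := by rw [huv]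
  have hπf : π.filter (fun a => decide (a ∈ B)) = π := by
    rw [List.filter_eq_self]
    intro a ha
    simpa using hπ.2 ▸ List.mem_toFinset.mpr ha
  have hπ₀f : π₀.filter (fun a => decide (a ∈ B)) = π₀ := by
    rw [List.filter_eq_self]
    intro a ha
    simpa using hπ₀.2 ▸ List.mem_toFinset.mpr ha
  have htf : t.filter (fun a => decide (a ∈ B)) = [] := by
    rw [List.filter_eq_nil_iff]
    intro a ha
    simpa using ht a ha
  rw [List.filter_append, List.filter_append, List.filter_append, hπf, hπ₀f, htf,
    List.append_nil] at hfil
  have hlen : π.length = π₀.length := by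
    rw [isRanking_length hπ, isRanking_length hπ₀]
  have hlen2 := congrArg List.length hfil
  simp only [List.length_append, hlen] at hlen2
  have hu : u.filter (fun a => decide (a ∈ B)) = [] := by
    rw [← List.length_eq_zero_iff]; omega
  have hv : v.filter (fun a => decide (a ∈ B)) = [] := by
    rw [← List.length_eq_zero_iff]; omega
  rw [hu, hv, List.nil_append, List.append_nil] at hfil
  exact hfil

/-- **Injectivity of the synthesis operator on localization spaces.**
For `A ⊆ [n]` with `|A| ≥ 2` and `B ∈ P̄(A)`, the restriction of `φ_A` to `H_B` is injective. -/
theorem synth_injective_on_H {n : ℕ} (hn : 2 ≤ n)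
    (A : Finset (Fin n)) (hA : 2 ≤ A.card)
    (B : Finset (Fin n)) (hB : B ∈ Pbar A)
    (F : Word n → ℝ) (hF : MemH B F) (h : synth A F = 0) :
    F = 0 := by
  have hBA : B ⊆ A := Finset.mem_powerset.mp (Finset.mem_filter.mp hB).1
  have hBor : 2 ≤ B.card ∨ B = ∅ := (Finset.mem_filter.mp hB).2
  funext π₀
  simp only [Pi.zero_apply]
  by_contra hne
  have hr : IsRanking B π₀ := hF.1 π₀ hne
  set t : Word n := (A \ B).toList with ht_def
  have ht : ∀ a ∈ t, a ∉ B := fun a ha => (Finset.mem_sdiff.mp (Finset.mem_toList.mp ha)).2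
  set σ : Word n := π₀ ++ t with hσ_def
  have hπ₀B : ∀ a ∈ π₀, a ∈ B := fun a ha => hr.2 ▸ List.mem_toFinset.mpr ha
  have hσ : IsRanking A σ := by
    constructor
    · rw [List.nodup_append]
      refine ⟨hr.1, Finset.nodup_toList _, fun a ha b hb hab => by subst hab; exact ht a hb (hπ₀B a ha)⟩
    · ext a
      simp only [hσ_def, List.toFinset_append, Finset.mem_union, List.mem_toFinset, ht_def,
        Finset.mem_toList, Finset.mem_sdiff]
      constructor
      · rintro (ha | ha)
        · exact hBA (hπ₀B a ha)
        · exact ha.1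
      · intro ha
        by_cases hb : a ∈ B
        · left; rw [← List.mem_toFinset, hr.2]; exact hb
        · right; exact ⟨ha, hb⟩
  have h0 : synth A F σ = 0 := congrFun h σ
  rw [synth, if_pos hσ] at h0
  rcases hBor with hB2 | hBe
  · -- 2 ≤ B.card
    have hπ₀ne : π₀ ≠ [] := by
      intro he
      have := isRanking_length hr
      rw [he] at this
      simp at this
      omega
    have hF0 : F [] = 0 := by
      by_contra hF0
      have := isRanking_length (hF.1 [] hF0)
      simp at this
      omega
    have hmem : π₀ ∈ allWords n := mem_allWords_of_nodup π₀ hr.1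
    have hsum : ∑ π ∈ allWords n,
        (if π ≠ [] ∧ π <:+: σ then F π / (Nat.factorial (A.card - π.length + 1) : ℝ) else 0)
        = F π₀ / (Nat.factorial (A.card - π₀.length + 1) : ℝ) := by
      rw [Finset.sum_eq_single π₀]
      · rw [if_pos ⟨hπ₀ne, (List.prefix_append π₀ t).isInfix⟩]
      · intro π _ hπne
        split_ifs with hc
        · by_cases hFπ : F π = 0
          · rw [hFπ]; simp
          · exact absurd (infix_unique B π π₀ t (hF.1 π hFπ) hr ht hc.2) hπne
        · rfl
      · intro hcon; exact absurd hmem hcon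
    rw [hF0, hsum] at h0
    simp only [zero_div, zero_add] at h0
    have : F π₀ = 0 := by
      field_simp at h0
      simpa using h0
    exact hne this
  · -- B = ∅
    have hπ₀e : π₀ = [] := by
      have := isRanking_length hr
      rw [hBe] at this
      simpa using List.length_eq_zero_iff.mp (by simpa using this)
    have hsum : ∑ π ∈ allWords n,
        (if π ≠ [] ∧ π <:+: σ then F π / (Nat.factorial (A.card - π.length + 1) : ℝ) else 0)
        = 0 := by
      refine Finset.sum_eq_zero fun π _ => ?_
      split_ifs with hc
      · have hFπ : F π = 0 := by
          by_contra hFπ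
          have := (hF.1 π hFπ).2
          rw [hBe] at this
          exact hc.1 (by simpa using List.toFinset_eq_empty_iff π |>.mp this)
        rw [hFπ]; simp
      · rfl
    rw [hsum, add_zero] at h0
    have : F [] = 0 := by
      have hfac : (Nat.factorial A.card : ℝ) ≠ 0 := by
        exact_mod_cast Nat.factorial_ne_zero A.card
      field_simp at h0
      simpa using h0
    rw [hπ₀e] at hne
    exact hne this
end

section
/- Evaluation formula for sums of synthesized functions: let A ⊆ [n] with |A| = k ≥ 2, let (X_B)_{B∈P̄(A)} be any family with X_B ∈ L(Γ(B)) for each B ∈ P̄(A), and let π = π₁π₂…π_k ∈ Γ(A). Then Σ_{B∈P̄(A)} φ_A X_B(π) = (1/k!)·X_∅(0̄) + Σ_{1≤i<j≤k} (1/(k−j+i)!)·X_{C(i,j)}(π_i π_{i+1} … π_j), where C(i,j) := {π_i,…,π_j} is the content of the contiguous subword π_i…π_j. -/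
open Finset
open scoped List

lemma mem_rankings_iff {n : ℕ} {B : Finset (Fin n)} {w : Word n} :
    w ∈ rankings n B ↔ IsRanking B w := by
  rw [rankings, List.mem_toFinset, List.mem_permutations]
  constructor
  · intro h
    exact ⟨h.symm.nodup (Finset.nodup_toList B), by rw [List.toFinset_eq_of_perm _ _ h,
      Finset.toList_toFinset]⟩
  · rintro ⟨h1, h2⟩
    exact List.perm_of_nodup_nodup_toFinset_eq h1 (Finset.nodup_toList B)
      (by rw [h2, Finset.toList_toFinset])

lemma mem_allWords_iff {n : ℕ} {w : Word n} : w ∈ allWords n ↔ w.Nodup := by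
  simp only [allWords, Finset.mem_biUnion, Finset.mem_univ, true_and, mem_rankings_iff]
  exact ⟨fun ⟨B, h⟩ => h.1, fun h => ⟨w.toFinset, h, rfl⟩⟩

/-- **Evaluation formula for sums of synthesized functions.**
For `A` with `|A| = k ≥ 2`, a family `X_B ∈ L(Γ(B))` for `B ∈ P̄(A)`, and `π ∈ Γ(A)`:
`Σ_{B∈P̄(A)} φ_A X_B (π) = X_∅(0̄)/k! + Σ_{0≤i<j<k} X_{C(i,j)}(π_i…π_j)/(k−j+i)!`
(indices `i, j` zero-based), where `π_i…π_j = (π.drop i).take (j−i+1)` and `C(i,j)` is its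
content. -/
theorem eval_sum_synth {n : ℕ} (hn : 2 ≤ n)
    (A : Finset (Fin n)) (k : ℕ) (hk : A.card = k) (hk2 : 2 ≤ k)
    (X : Finset (Fin n) → Word n → ℝ) (hX : ∀ B ∈ Pbar A, MemL B (X B))
    (π : Word n) (hπ : IsRanking A π) (hπk : π.length = k) :
    (∑ B ∈ Pbar A, synth A (X B)) π =
      X ∅ [] / (Nat.factorial k : ℝ) +
        ∑ i ∈ Finset.range k, ∑ j ∈ Finset.range k,
          (if i < j then
            X ((π.drop i).take (j - i + 1)).toFinset ((π.drop i).take (j - i + 1)) /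
              (Nat.factorial (k - j + i) : ℝ)
          else 0) := by
  obtain ⟨hnd, hA⟩ := hπ
  have hPbar_empty : (∅ : Finset (Fin n)) ∈ Pbar A := by
    simp [Pbar]
  have hsumB : ∀ w : Word n, ∑ B ∈ Pbar A, X B w =
      if w.toFinset ∈ Pbar A then X w.toFinset w else 0 := by
    intro w
    split_ifs with h
    · refine Finset.sum_eq_single_of_mem _ h fun B hB hne => ?_
      by_contra h0
      exact hne (hX B hB w h0).2.symm
    · refine Finset.sum_eq_zero fun B hB => ?_
      by_contra h0
      exact h ((hX B hB w h0).2 ▸ hB)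
  rw [Finset.sum_apply]
  have hsynth : ∀ B, synth A (X B) π =
      X B [] / (k.factorial : ℝ) + ∑ w ∈ allWords n,
        (if w ≠ [] ∧ w <:+: π then X B w / ((k - w.length + 1).factorial : ℝ) else 0) := by
    intro B
    have hπ' : IsRanking A π := ⟨hnd, hA⟩
    rw [synth, if_pos hπ', hk]
  simp only [hsynth]
  rw [Finset.sum_add_distrib, ← Finset.sum_div]
  have h0 : ∑ B ∈ Pbar A, X B [] = X ∅ [] := by
    rw [hsumB []]
    simp only [List.toFinset_nil, if_pos hPbar_empty]
    exact if_pos hPbar_empty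
  rw [h0]
  congr 1
  have h2 : ∑ B ∈ Pbar A, ∑ w ∈ allWords n,
      (if w ≠ [] ∧ w <:+: π then X B w / ((k - w.length + 1).factorial : ℝ) else 0)
      = ∑ w ∈ allWords n, (if (w ≠ [] ∧ w <:+: π) ∧ w.toFinset ∈ Pbar A then
          X w.toFinset w / ((k - w.length + 1).factorial : ℝ) else 0) := by
    rw [Finset.sum_comm]
    refine Finset.sum_congr rfl fun w _ => ?_
    by_cases h : w ≠ [] ∧ w <:+: π
    · simp only [if_pos h, ← Finset.sum_div, hsumB w]
      by_cases h' : w.toFinset ∈ Pbar A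
      · rw [if_pos h', if_pos ⟨h, h'⟩]
      · rw [if_neg h', if_neg (fun hc => h' hc.2), zero_div]
    · simp [h]
  rw [h2]
  rw [← Finset.sum_filter, show (∑ i ∈ Finset.range k, ∑ j ∈ Finset.range k,
      (if i < j then X ((π.drop i).take (j - i + 1)).toFinset ((π.drop i).take (j - i + 1)) /
        ((k - j + i).factorial : ℝ) else 0)) =
      ∑ p ∈ (Finset.range k ×ˢ Finset.range k).filter (fun p => p.1 < p.2),
        X ((π.drop p.1).take (p.2 - p.1 + 1)).toFinset ((π.drop p.1).take (p.2 - p.1 + 1)) /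
          ((k - p.2 + p.1).factorial : ℝ) from by
    rw [Finset.sum_filter, Finset.sum_product]]
  refine (Finset.sum_bij (fun p _ => (π.drop p.1).take (p.2 - p.1 + 1)) ?_ ?_ ?_ ?_).symm
  · rintro ⟨i, j⟩ hp
    simp only [Finset.mem_filter, Finset.mem_product, Finset.mem_range] at hp
    obtain ⟨⟨hik, hjk⟩, hij⟩ := hp
    set w : Word n := (π.drop i).take (j - i + 1) with hw
    have hlen : w.length = j - i + 1 := by
      simp only [hw, List.length_take, List.length_drop, hπk]
      omega
    have hinf : w <:+: π :=
      List.infix_iff_prefix_suffix.mpr ⟨π.drop i, List.take_prefix _ _, List.drop_suffix _ _⟩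
    have hwnd : w.Nodup := hinf.sublist.nodup hnd
    simp only [Finset.mem_filter, mem_allWords_iff]
    refine ⟨hwnd, ⟨⟨?_, hinf⟩, ?_⟩⟩
    · exact List.ne_nil_of_length_pos (by rw [hlen]; exact Nat.succ_pos _)
    · simp only [Pbar, Finset.mem_filter, Finset.mem_powerset]
      constructor
      · intro x hx
        rw [List.mem_toFinset] at hx
        rw [← hA, List.mem_toFinset]
        exact hinf.sublist.subset hx
      · left
        rw [List.toFinset_card_of_nodup hwnd, hlen]
        omega
  · rintro ⟨i₁, j₁⟩ hp₁ ⟨i₂, j₂⟩ hp₂ heq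
    simp only [Finset.mem_filter, Finset.mem_product, Finset.mem_range] at hp₁ hp₂
    obtain ⟨⟨hik₁, hjk₁⟩, hij₁⟩ := hp₁
    obtain ⟨⟨hik₂, hjk₂⟩, hij₂⟩ := hp₂
    simp only at heq
    have hlen₁ : ((π.drop i₁).take (j₁ - i₁ + 1)).length = j₁ - i₁ + 1 := by
      simp only [List.length_take, List.length_drop, hπk]; omega
    have hlen₂ : ((π.drop i₂).take (j₂ - i₂ + 1)).length = j₂ - i₂ + 1 := by
      simp only [List.length_take, List.length_drop, hπk]; omega
    have hi₁ : i₁ < π.length := by omega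
    have hi₂ : i₂ < π.length := by omega
    have hg : π[i₁] = π[i₂] := by
      have e₁ : ((π.drop i₁).take (j₁ - i₁ + 1))[0]'(by omega) = π[i₁] := by
        rw [List.getElem_take, List.getElem_drop]; simp
      have e₂ : ((π.drop i₂).take (j₂ - i₂ + 1))[0]'(by omega) = π[i₂] := by
        rw [List.getElem_take, List.getElem_drop]; simp
      rw [← e₁, ← e₂]
      exact List.getElem_of_eq heq (by omega)
    have hii : i₁ = i₂ := (hnd.getElem_inj_iff).mp hg
    have hll := congrArg List.length heq
    rw [hlen₁, hlen₂] at hll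
    have : j₁ = j₂ := by omega
    simp [hii, this]
  · intro b hb
    simp only [Finset.mem_filter, mem_allWords_iff] at hb
    obtain ⟨hbnd, ⟨hbne, hbinf⟩, hbP⟩ := hb
    obtain ⟨s, t, hst⟩ := hbinf
    have hlen2 : 2 ≤ b.length := by
      simp only [Pbar, Finset.mem_filter, Finset.mem_powerset] at hbP
      rcases hbP.2 with h' | h'
      · rwa [List.toFinset_card_of_nodup hbnd] at h'
      · exact absurd (List.toFinset_eq_empty_iff b |>.mp h') hbne
    have hltot : s.length + b.length + t.length = k := by
      have h := congrArg List.length hst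
      simp only [List.length_append, hπk] at h
      omega
    refine ⟨(s.length, s.length + b.length - 1), ?_, ?_⟩
    · simp only [Finset.mem_filter, Finset.mem_product, Finset.mem_range]
      omega
    · have hdrop : π.drop s.length = b ++ t := by
        rw [← hst, List.append_assoc, List.drop_left]
      simp only [hdrop]
      rw [show s.length + b.length - 1 - s.length + 1 = b.length by omega, List.take_left]
  · rintro ⟨i, j⟩ hp
    simp only [Finset.mem_filter, Finset.mem_product, Finset.mem_range] at hp
    obtain ⟨⟨hik, hjk⟩, hij⟩ := hp
    have hlen : ((π.drop i).take (j - i + 1)).length = j - i + 1 := by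
      simp only [List.length_take, List.length_drop, hπk]; omega
    simp only [hlen]
    rw [show k - (j - i + 1) + 1 = k - j + i by omega]
end

section
/- The alternative embedding sends localization spaces into the wavelet subspaces of L(Γ([n])): let A ⊆ [n] with |A| = k ≥ 2 and F ∈ H_A. Then (i) M_A(φ'_{[n]} F) = F; (ii) M_B(φ'_{[n]} F) = 0 for every B ⊆ [n] with 2 ≤ |B| ≤ k−1; and (iii) Σ_{σ∈Γ([n])} (φ'_{[n]}F)(σ) = 0. In particular φ'_{[n]} is injective on H_A. -/
open Finset
open scoped List

/-- The alternative embedding `φ'_B`: `φ'_B δ_π = (|π|!/|B|!)·1_{{σ ∈ Γ(B) : π ⊂ σ}}`. -/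
noncomputable def synth' {n : ℕ} (B : Finset (Fin n)) (F : Word n → ℝ) : Word n → ℝ :=
  fun σ =>
    if IsRanking B σ then
      ∑ π ∈ allWords n,
        (if π <+ σ then ((Nat.factorial π.length : ℝ) / (Nat.factorial B.card : ℝ)) * F π else 0)
    else 0

namespace SynthAux

variable {n : ℕ}

lemma mem_rankings {A : Finset (Fin n)} {w : Word n} : w ∈ rankings n A ↔ IsRanking A w := by
  simp only [rankings, List.mem_toFinset, List.mem_permutations]
  constructor
  · intro h
    refine ⟨h.nodup_iff.mpr A.nodup_toList, ?_⟩
    ext a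
    simp [List.mem_toFinset, h.mem_iff]
  · rintro ⟨h1, h2⟩
    exact List.perm_of_nodup_nodup_toFinset_eq h1 A.nodup_toList
      (by rw [h2, A.toList_toFinset])

lemma mem_allWords {w : Word n} : w ∈ allWords n ↔ w.Nodup := by
  simp only [allWords, Finset.mem_biUnion, Finset.mem_univ, true_and, mem_rankings]
  constructor
  · rintro ⟨A, h, _⟩; exact h
  · intro h; exact ⟨w.toFinset, h, rfl⟩

lemma sum_allWords_eq_rankings {A : Finset (Fin n)} (g : Word n → ℝ)
    (hg : ∀ w ∈ allWords n, w ∉ rankings n A → g w = 0) :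
    ∑ w ∈ allWords n, g w = ∑ w ∈ rankings n A, g w :=
  (Finset.sum_subset (fun w hw => mem_allWords.mpr (mem_rankings.mp hw).1) hg).symm

lemma restrict_eq_self {w : Word n} {A : Finset (Fin n)} (h : ∀ a ∈ w, a ∈ A) :
    restrictWord w A = w :=
  List.filter_eq_self.mpr fun a ha => by simpa using h a ha

lemma restrict_nodup {w : Word n} (h : w.Nodup) (A : Finset (Fin n)) :
    (restrictWord w A).Nodup := h.filter _

lemma restrict_sublist (w : Word n) (A : Finset (Fin n)) : restrictWord w A <+ w :=
  List.filter_sublist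

lemma restrict_toFinset {w : Word n} {A : Finset (Fin n)} (hA : A ⊆ w.toFinset) :
    (restrictWord w A).toFinset = A := by
  rw [restrictWord, List.toFinset_filter]
  ext a
  simp only [Finset.mem_filter, decide_eq_true_eq]
  exact ⟨fun h => h.2, fun h => ⟨hA h, h⟩⟩

lemma restrict_length {w : Word n} {A : Finset (Fin n)} (hw : w.Nodup) (hA : A ⊆ w.toFinset) :
    (restrictWord w A).length = A.card := by
  have h := List.toFinset_card_of_nodup (restrict_nodup hw A)
  rw [restrict_toFinset hA] at h
  omega

lemma length_of_isRanking {A : Finset (Fin n)} {w : Word n} (h : IsRanking A w) :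
    w.length = A.card := by
  rw [← h.2, List.toFinset_card_of_nodup h.1]

lemma sublist_eq_restrict {τ σ : Word n} {A : Finset (Fin n)} (hτ : IsRanking A τ)
    (hσn : σ.Nodup) (hAσ : A ⊆ σ.toFinset) (h : τ <+ σ) : τ = restrictWord σ A := by
  have h1 : τ <+ restrictWord σ A := by
    have h2 := h.filter (fun a => decide (a ∈ A))
    rwa [show τ.filter (fun a => decide (a ∈ A)) = τ from
      List.filter_eq_self.mpr fun a ha => by
        simp [hτ.2 ▸ List.mem_toFinset.mpr ha]] at h2
  exact h1.eq_of_length (by rw [length_of_isRanking hτ, restrict_length hσn hAσ])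

/-- sum of an indicator times constant -/
lemma sum_ite_const {γ : Type*} (s : Finset γ) (p : γ → Prop) [DecidablePred p] (c : ℝ) :
    ∑ x ∈ s, (if p x then c else 0) = ((s.filter p).card : ℝ) * c := by
  rw [Finset.sum_ite, Finset.sum_const, Finset.sum_const_zero, add_zero, nsmul_eq_mul]

lemma takeWhile_dropWhile_eq {x : Fin n} :
    ∀ (u v : Word n), x ∉ u →
      (u ++ x :: v).takeWhile (fun a => decide (a ≠ x)) = u ∧
      (u ++ x :: v).dropWhile (fun a => decide (a ≠ x)) = x :: v := by
  intro u
  induction u with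
  | nil => intro v _; simp
  | cons a u ih =>
    intro v h
    simp only [List.mem_cons, not_or] at h
    have hax : ¬ (a = x) := fun e => h.1 e.symm
    obtain ⟨h1, h2⟩ := ih v h.2
    simp only [ne_eq, decide_not] at h1 h2 ⊢
    simp [List.takeWhile_cons, List.dropWhile_cons, hax, h1, h2]

/-- reindexing: summing over `Γ(C)` as inserting `x` into words of `Γ(C.erase x)` -/
lemma decomp_rankings {C : Finset (Fin n)} {x : Fin n} (hx : x ∈ C) {ρ : Word n}
    (hρ : ρ ∈ rankings n C) :
    ∃ u v : Word n, ρ = u ++ x :: v ∧ x ∉ u ∧ x ∉ v ∧ (u ++ v).Nodup ∧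
      (u ++ v).toFinset = C.erase x := by
  obtain ⟨hnd, hfs⟩ := mem_rankings.mp hρ
  have hxρ : x ∈ ρ := by rw [← List.mem_toFinset, hfs]; exact hx
  obtain ⟨u, v, rfl⟩ := List.append_of_mem hxρ
  have h2 := List.nodup_middle.mp hnd
  rw [List.nodup_cons] at h2
  have hxu : x ∉ u := fun h => h2.1 (List.mem_append.mpr (Or.inl h))
  have hxv : x ∉ v := fun h => h2.1 (List.mem_append.mpr (Or.inr h))
  refine ⟨u, v, rfl, hxu, hxv, h2.2, ?_⟩
  rw [← hfs]
  ext a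
  by_cases hax : a = x
  · subst hax; simp [hxu, hxv]
  · simp only [List.mem_toFinset, List.mem_append, Finset.mem_erase, hax, ne_eq,
      not_false_iff, true_and, List.mem_cons]
    tauto

lemma sum_rankings_insert {C : Finset (Fin n)} {x : Fin n} (hx : x ∈ C) (f : Word n → ℝ) :
    ∑ ρ ∈ rankings n C, f ρ
      = ∑ w ∈ rankings n (C.erase x), ∑ j ∈ Finset.range (w.length + 1),
          f (w.take j ++ x :: w.drop j) := by
  classical
  rw [← Finset.sum_sigma (rankings n (C.erase x)) (fun w => Finset.range (w.length + 1))
    (fun p => f (p.1.take p.2 ++ x :: p.1.drop p.2))]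
  refine Finset.sum_nbij'
    (i := fun ρ => (⟨ρ.takeWhile (fun a => decide (a ≠ x)) ++ (ρ.dropWhile (fun a => decide (a ≠ x))).tail,
      (ρ.takeWhile (fun a => decide (a ≠ x))).length⟩ : Σ _ : Word n, ℕ))
    (j := fun p => p.1.take p.2 ++ x :: p.1.drop p.2) ?_ ?_ ?_ ?_ ?_
  · intro ρ hρ
    obtain ⟨u, v, rfl, hxu, hxv, hnd, hfs⟩ := decomp_rankings hx hρ
    obtain ⟨h1, h2⟩ := takeWhile_dropWhile_eq u v hxu
    simp only [Finset.mem_sigma, h1, h2, List.tail_cons, Finset.mem_range, List.length_append]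
    exact ⟨mem_rankings.mpr ⟨hnd, hfs⟩, by omega⟩
  · intro p hp
    rw [Finset.mem_sigma] at hp
    obtain ⟨hw, hj⟩ := hp
    obtain ⟨hnd, hfs⟩ := mem_rankings.mp hw
    have hxw : x ∉ p.1 := by
      rw [← List.mem_toFinset, hfs]
      exact Finset.notMem_erase x C
    have hperm : p.1.take p.2 ++ x :: p.1.drop p.2 ~ x :: p.1 := by
      have := List.perm_middle (a := x) (l₁ := p.1.take p.2) (l₂ := p.1.drop p.2)
      rwa [List.take_append_drop] at this
    refine mem_rankings.mpr ⟨?_, ?_⟩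
    · exact hperm.nodup_iff.mpr (List.nodup_cons.mpr ⟨hxw, hnd⟩)
    · ext a
      rw [List.mem_toFinset, hperm.mem_iff]
      simp only [List.mem_cons]
      rw [← List.mem_toFinset, hfs]
      constructor
      · rintro (rfl | h)
        · exact hx
        · exact Finset.mem_of_mem_erase h
      · intro haC
        by_cases hax : a = x
        · exact Or.inl hax
        · exact Or.inr (Finset.mem_erase.mpr ⟨hax, haC⟩)
  · intro ρ hρ
    obtain ⟨u, v, rfl, hxu, hxv, hnd, hfs⟩ := decomp_rankings hx hρ
    obtain ⟨h1, h2⟩ := takeWhile_dropWhile_eq u v hxu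
    simp only [h1, h2, List.tail_cons]
    rw [List.take_left, List.drop_left]
  · intro p hp
    rw [Finset.mem_sigma] at hp
    obtain ⟨hw, hj⟩ := hp
    obtain ⟨hnd, hfs⟩ := mem_rankings.mp hw
    have hxw : x ∉ p.1 := by
      rw [← List.mem_toFinset, hfs]
      exact Finset.notMem_erase x C
    have hxt : x ∉ p.1.take p.2 := fun h => hxw ((List.take_sublist _ _).subset h)
    obtain ⟨h1, h2⟩ := takeWhile_dropWhile_eq (p.1.take p.2) (p.1.drop p.2) hxt
    have hjlen : p.2 ≤ p.1.length := by
      rw [Finset.mem_range] at hj; omega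
    simp only [h1, h2, List.tail_cons, List.take_append_drop, List.length_take]
    congr 1
    omega
  · intro ρ hρ
    obtain ⟨u, v, rfl, hxu, hxv, hnd, hfs⟩ := decomp_rankings hx hρ
    obtain ⟨h1, h2⟩ := takeWhile_dropWhile_eq u v hxu
    simp only [h1, h2, List.tail_cons]
    rw [List.take_left, List.drop_left]

lemma sublist_ins_iff {π u v : Word n} {x : Fin n} (hxπ : x ∉ π) :
    (π <+ u ++ x :: v) ↔ π <+ u ++ v := by
  constructor
  · intro h
    have h2 := h.filter (fun a => decide (a ≠ x))
    rw [show π.filter (fun a => decide (a ≠ x)) = π from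
      List.filter_eq_self.mpr fun a ha => by simp; rintro rfl; exact hxπ ha] at h2
    rw [List.filter_append, List.filter_cons, if_neg (by simp)] at h2
    calc π <+ u.filter (fun a => decide (a ≠ x)) ++ v.filter (fun a => decide (a ≠ x)) := by
            simpa using h2
      _ <+ u ++ v := List.filter_sublist.append List.filter_sublist
  · intro h
    exact h.trans ((List.sublist_cons_self x v).append_left u)

lemma cons_sublist_of_ne {c x : Fin n} {L v : Word n} (h : c :: L <+ x :: v) (hne : c ≠ x) :
    c :: L <+ v := by
  cases h with
  | cons _ h => exact h
  | cons_cons => exact absurd rfl hne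

lemma split_sublist {α β u v : Word n} {x : Fin n} (hxα : x ∉ α) (hxβ : x ∉ β)
    (hxu : x ∉ u) (hxv : x ∉ v) :
    (α ++ x :: β <+ u ++ x :: v) ↔ (α <+ u ∧ β <+ v) := by
  constructor
  · intro h
    rw [List.sublist_append_iff] at h
    obtain ⟨l₁, l₂, heq, h1, h2⟩ := h
    have hxl₁ : x ∉ l₁ := fun hm => hxu (h1.subset hm)
    have hlen : l₁.length ≤ α.length := by
      by_contra hl
      push_neg at hl
      apply hxl₁
      have hle : l₁ = (α ++ x :: β).take l₁.length := by rw [heq, List.take_left]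
      rw [hle, List.take_append]
      refine List.mem_append.mpr (Or.inr ?_)
      have h9 : l₁.length - α.length = (l₁.length - α.length - 1) + 1 := by omega
      rw [h9, List.take_succ_cons]
      exact List.mem_cons_self
    have hl₁ : α.take l₁.length = l₁ := by
      have h8 := congrArg (List.take l₁.length) heq
      rwa [List.take_left, List.take_append_of_le_length hlen] at h8
    have hl₂ : l₂ = α.drop l₁.length ++ x :: β := by
      have h8 := congrArg (List.drop l₁.length) heq
      rw [List.drop_left, List.drop_append_of_le_length hlen] at h8
      exact h8.symm
    rcases hγ : α.drop l₁.length with _ | ⟨c, γ'⟩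
    · have hlen2 : α.length ≤ l₁.length := by
        have h7 := congrArg List.length hγ
        simp only [List.length_drop, List.length_nil] at h7
        omega
      have hl₁' : l₁ = α := by
        rw [← hl₁, List.take_of_length_le hlen2]
      have h2' : x :: β <+ x :: v := by
        rw [hl₂, hγ, List.nil_append] at h2
        exact h2
      exact ⟨hl₁' ▸ h1, List.cons_sublist_cons.mp h2'⟩
    · exfalso
      have hcα : c ∈ α := by
        have : c ∈ α.drop l₁.length := by rw [hγ]; exact List.mem_cons_self
        exact (List.drop_sublist _ _).subset this
      have hcx : c ≠ x := fun e => hxα (e ▸ hcα)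
      have h2' : c :: (γ' ++ x :: β) <+ x :: v := by
        rw [hl₂, hγ, List.cons_append] at h2
        exact h2
      have h3 := cons_sublist_of_ne h2' hcx
      exact hxv (h3.subset (by simp))
  · rintro ⟨h1, h2⟩
    exact h1.append (List.cons_sublist_cons.mpr h2)

/-- The key counting identity for split points. -/
lemma split_count {w α β : Word n} (hw : w.Nodup) (C' : Finset (Fin n))
    (hwC : w.toFinset ⊆ C') :
    ((Finset.range (w.length + 1)).filter (fun j => α <+ w.take j ∧ β <+ w.drop j)).card
      = (if α ++ β <+ w then 1 else 0)
        + ((C' \ (α ++ β).toFinset).filter (fun y => α ++ y :: β <+ w)).card := by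
  classical
  by_cases h : α ++ β <+ w
  · rw [if_pos h]
    have hα : α <+ w := (List.sublist_append_left α β).trans h
    have hβ : β <+ w := (List.sublist_append_right α β).trans h
    have hex : ∃ j, α <+ w.take j := ⟨w.length, by rw [List.take_length]; exact hα⟩
    set ja := Nat.find hex with hja_def
    have fja : α <+ w.take ja := Nat.find_spec hex
    have hjaw : ja ≤ w.length := Nat.find_min' hex (by rw [List.take_length]; exact hα)
    set jb := Nat.findGreatest (fun j => β <+ w.drop j) w.length with hjb_def
    have fjb : β <+ w.drop jb :=
      Nat.findGreatest_spec (P := fun j => β <+ w.drop j) (Nat.zero_le _) (show β <+ w.drop 0 by rw [List.drop_zero]; exact hβ)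
    have hjbw : jb ≤ w.length := Nat.findGreatest_le _
    have Pmono : ∀ {j j' : ℕ}, j ≤ j' → α <+ w.take j → α <+ w.take j' := by
      intro j j' hjj hs
      have he : w.take j = (w.take j').take j := by rw [List.take_take, min_eq_left hjj]
      rw [he] at hs
      exact hs.trans (List.take_sublist _ _)
    have Qanti : ∀ {j j' : ℕ}, j ≤ j' → β <+ w.drop j' → β <+ w.drop j := by
      intro j j' hjj hs
      have he : w.drop j' = (w.drop j).drop (j' - j) := by
        rw [List.drop_drop]
        congr 1
        omega
      rw [he] at hs
      exact hs.trans (List.drop_sublist _ _)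
    have charP : ∀ j : ℕ, (α <+ w.take j ↔ ja ≤ j) := fun j =>
      ⟨fun hs => Nat.find_min' hex hs, fun hj => Pmono hj fja⟩
    have charQ : ∀ j : ℕ, j ≤ w.length → (β <+ w.drop j ↔ j ≤ jb) := by
      intro j hjw
      constructor
      · intro hs
        by_contra hc
        push_neg at hc
        exact Nat.findGreatest_is_greatest hc hjw hs
      · intro hj
        exact Qanti hj fjb
    have hjab : ja ≤ jb := by
      rw [List.append_sublist_iff] at h
      obtain ⟨r₁, r₂, heq, h1, h2⟩ := h
      have hr : r₁.length ≤ w.length := by rw [heq]; simp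
      have p1 : α <+ w.take r₁.length := by rw [heq, List.take_left]; exact h1
      have p2 : β <+ w.drop r₁.length := by rw [heq, List.drop_left]; exact h2
      have q1 := (charP _).mp p1
      have q2 := (charQ _ hr).mp p2
      omega
    have hLHS : (Finset.range (w.length + 1)).filter (fun j => α <+ w.take j ∧ β <+ w.drop j)
        = Finset.Icc ja jb := by
      ext j
      simp only [Finset.mem_filter, Finset.mem_range, Finset.mem_Icc]
      constructor
      · rintro ⟨hjr, hP, hQ⟩
        exact ⟨(charP j).mp hP, (charQ j (by omega)).mp hQ⟩
      · rintro ⟨h1, h2⟩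
        exact ⟨by omega, (charP j).mpr h1, (charQ j (by omega)).mpr h2⟩
    have hRHS : ((C' \ (α ++ β).toFinset).filter (fun y => α ++ y :: β <+ w)).card
        = (Finset.Ico ja jb).card := by
      symm
      refine Finset.card_bij (fun i hi => w[i]'(by
        rw [Finset.mem_Ico] at hi; omega)) ?_ ?_ ?_
      · intro i hi
        rw [Finset.mem_Ico] at hi
        have hiw : i < w.length := by omega
        rw [Finset.mem_filter, Finset.mem_sdiff]
        refine ⟨⟨hwC (List.mem_toFinset.mpr (List.getElem_mem hiw)), ?_⟩, ?_⟩
        · intro hmem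
          rw [List.mem_toFinset, List.mem_append] at hmem
          rcases hmem with hmem | hmem
          · have h3 : w[i] ∈ w.take ja := fja.subset hmem
            rw [List.mem_iff_getElem] at h3
            obtain ⟨i', hi', he⟩ := h3
            rw [List.getElem_take] at he
            have : i' = i := by
              rw [List.Nodup.getElem_inj_iff hw] at he
              exact he
            rw [List.length_take] at hi'
            omega
          · have h3 : w[i] ∈ w.drop jb := fjb.subset hmem
            rw [List.mem_iff_getElem] at h3
            obtain ⟨i', hi', he⟩ := h3
            rw [List.getElem_drop] at he
            have : jb + i' = i := by
              rw [List.Nodup.getElem_inj_iff hw] at he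
              exact he
            omega
        · have hwi : w = w.take i ++ w[i] :: w.drop (i + 1) := by
            conv_lhs => rw [← List.take_append_drop i w]
            rw [List.drop_eq_getElem_cons hiw]
          have hstep : α ++ w[i] :: β <+ w.take i ++ w[i] :: w.drop (i + 1) :=
            ((charP i).mpr hi.1).append
              (List.cons_sublist_cons.mpr (Qanti (by omega) fjb))
          rwa [← hwi] at hstep
      · intro i₁ hi₁ i₂ hi₂ he
        rw [Finset.mem_Ico] at hi₁ hi₂
        rwa [List.Nodup.getElem_inj_iff hw] at he
      · intro y hy
        rw [Finset.mem_filter, Finset.mem_sdiff] at hy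
        obtain ⟨⟨hyC, hyαβ⟩, hsub⟩ := hy
        rw [List.append_sublist_iff] at hsub
        obtain ⟨r₁, r₂, heqw, h1, h2⟩ := hsub
        rw [show y :: β = [y] ++ β from rfl, List.append_sublist_iff] at h2
        obtain ⟨s₁, s₂, heqr, h3, h4⟩ := h2
        have hy1 : y ∈ s₁ := List.singleton_sublist.mp h3
        obtain ⟨t₁, t₂, rfl⟩ := List.append_of_mem hy1
        have hw2 : w = (r₁ ++ t₁) ++ y :: (t₂ ++ s₂) := by
          rw [heqw, heqr]
          simp [List.append_assoc]
        refine ⟨(r₁ ++ t₁).length, ?_, ?_⟩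
        · have hlenw : (r₁ ++ t₁).length + 1 ≤ w.length := by
            rw [hw2]
            simp only [List.length_append, List.length_cons]
            omega
          rw [Finset.mem_Ico]
          constructor
          · refine (charP _).mp ?_
            have : w.take (r₁ ++ t₁).length = r₁ ++ t₁ := by
              rw [hw2, List.take_left]
            rw [this]
            exact h1.trans (List.sublist_append_left _ _)
          · have hq : β <+ w.drop ((r₁ ++ t₁).length + 1) := by
              have h5 : w = ((r₁ ++ t₁) ++ [y]) ++ (t₂ ++ s₂) := by
                rw [hw2]
                simp
              have h6 : ((r₁ ++ t₁) ++ [y]).length = (r₁ ++ t₁).length + 1 := by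
                simp only [List.length_append, List.length_cons, List.length_nil]
              rw [h5, ← h6, List.drop_left]
              exact h4.trans (List.sublist_append_right _ _)
            have := (charQ _ (by omega)).mp hq
            omega
        · have h7 : ((r₁ ++ t₁) ++ y :: (t₂ ++ s₂))[(r₁ ++ t₁).length]'(by
              simp only [List.length_append, List.length_cons]; omega) = y := by
            rw [List.getElem_append_right (le_refl _)]
            simp
          exact (List.getElem_of_eq hw2 _).trans h7
    rw [hLHS, hRHS, Nat.card_Icc, Nat.card_Ico]
    omega
  · rw [if_neg h]
    have e1 : (Finset.range (w.length + 1)).filter (fun j => α <+ w.take j ∧ β <+ w.drop j)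
        = ∅ := by
      rw [Finset.filter_eq_empty_iff]
      rintro j _ ⟨hP, hQ⟩
      apply h
      have := hP.append hQ
      rwa [List.take_append_drop] at this
    have e2 : ((C' \ (α ++ β).toFinset).filter (fun y => α ++ y :: β <+ w)) = ∅ := by
      rw [Finset.filter_eq_empty_iff]
      intro y _ hsub
      exact h (((List.sublist_cons_self y β).append_left α).trans hsub)
    rw [e1, e2]
    simp

/-- The localized sum. -/
noncomputable def Ssum (A C : Finset (Fin n)) (F : Word n → ℝ) (π : Word n) : ℝ :=
  ∑ ρ ∈ rankings n C, (if π <+ ρ then F (restrictWord ρ A) else 0)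

lemma restrict_ins {A : Finset (Fin n)} {x : Fin n} (hxA : x ∉ A) (w : Word n) (j : ℕ) :
    restrictWord (w.take j ++ x :: w.drop j) A = restrictWord w A := by
  rw [restrictWord, List.filter_append, List.filter_cons, if_neg (by simp [hxA]),
    ← List.filter_append, List.take_append_drop]
  rfl

lemma erase_step {A C : Finset (Fin n)} {x : Fin n} (F : Word n → ℝ)
    (hx : x ∈ C) (hxA : x ∉ A) {π : Word n} (hxπ : x ∉ π) :
    Ssum A C F π = (C.card : ℝ) * Ssum A (C.erase x) F π := by
  classical
  rw [Ssum, sum_rankings_insert hx, Ssum, Finset.mul_sum]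
  refine Finset.sum_congr rfl ?_
  intro w hw
  obtain ⟨hnd, hfs⟩ := mem_rankings.mp hw
  have hlen : w.length = C.card - 1 := by
    rw [length_of_isRanking ⟨hnd, hfs⟩, Finset.card_erase_of_mem hx]
  have hterm : ∀ j ∈ Finset.range (w.length + 1),
      (if π <+ w.take j ++ x :: w.drop j then
        F (restrictWord (w.take j ++ x :: w.drop j) A) else 0)
      = (if π <+ w then F (restrictWord w A) else 0) := by
    intro j _
    have hs : (π <+ w.take j ++ x :: w.drop j) ↔ π <+ w := by
      rw [sublist_ins_iff hxπ, List.take_append_drop]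
    rw [restrict_ins hxA]
    exact if_congr hs rfl rfl
  rw [Finset.sum_congr rfl hterm, Finset.sum_const, Finset.card_range, nsmul_eq_mul]
  have hc : 0 < C.card := Finset.card_pos.mpr ⟨x, hx⟩
  have hnat : w.length + 1 = C.card := by omega
  rw [show ((w.length + 1 : ℕ) : ℝ) = (C.card : ℝ) by exact_mod_cast congrArg Nat.cast hnat]

lemma split_step {A C : Finset (Fin n)} {x : Fin n} (F : Word n → ℝ)
    (hx : x ∈ C) (hxA : x ∉ A) {π₁ π₂ : Word n} (hnd : (π₁ ++ x :: π₂).Nodup) :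
    Ssum A C F (π₁ ++ x :: π₂)
      = Ssum A (C.erase x) F (π₁ ++ π₂)
        + ∑ y ∈ (C.erase x) \ (π₁ ++ π₂).toFinset, Ssum A (C.erase x) F (π₁ ++ y :: π₂) := by
  classical
  have hnd' := List.nodup_middle.mp hnd
  rw [List.nodup_cons] at hnd'
  have hxπ₁ : x ∉ π₁ := fun h => hnd'.1 (List.mem_append.mpr (Or.inl h))
  have hxπ₂ : x ∉ π₂ := fun h => hnd'.1 (List.mem_append.mpr (Or.inr h))
  rw [Ssum, sum_rankings_insert hx]
  have step1 : ∀ w ∈ rankings n (C.erase x),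
      ∑ j ∈ Finset.range (w.length + 1),
        (if π₁ ++ x :: π₂ <+ w.take j ++ x :: w.drop j then
          F (restrictWord (w.take j ++ x :: w.drop j) A) else 0)
      = (if π₁ ++ π₂ <+ w then F (restrictWord w A) else 0)
        + ∑ y ∈ (C.erase x) \ (π₁ ++ π₂).toFinset,
            (if π₁ ++ y :: π₂ <+ w then F (restrictWord w A) else 0) := by
    intro w hw
    obtain ⟨hndw, hfsw⟩ := mem_rankings.mp hw
    have hxw : x ∉ w := by
      rw [← List.mem_toFinset, hfsw]
      exact Finset.notMem_erase x C
    have hterm : ∀ j ∈ Finset.range (w.length + 1),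
        (if π₁ ++ x :: π₂ <+ w.take j ++ x :: w.drop j then
          F (restrictWord (w.take j ++ x :: w.drop j) A) else 0)
        = (if π₁ <+ w.take j ∧ π₂ <+ w.drop j then F (restrictWord w A) else 0) := by
      intro j _
      rw [restrict_ins hxA]
      exact if_congr (split_sublist hxπ₁ hxπ₂
        (fun h => hxw ((List.take_sublist _ _).subset h))
        (fun h => hxw ((List.drop_sublist _ _).subset h))) rfl rfl
    rw [Finset.sum_congr rfl hterm, sum_ite_const,
      split_count hndw (C.erase x) (by rw [hfsw]), Nat.cast_add, add_mul]
    congr 1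
    · split_ifs <;> simp
    · rw [sum_ite_const]
  rw [Finset.sum_congr rfl step1, Finset.sum_add_distrib]
  simp only [Ssum]
  congr 1
  exact Finset.sum_comm

lemma main_aux (A : Finset (Fin n)) (hA2 : 2 ≤ A.card) (F : Word n → ℝ)
    (HH : ∀ ν : Word n, ν.Nodup → ν.length < A.card →
      ∑ τ ∈ rankings n A, (if ν <+ τ then F τ else 0) = 0) :
    ∀ (m : ℕ) (C : Finset (Fin n)), C.card ≤ m → A ⊆ C →
      (∀ π : Word n, π.Nodup → π.length < A.card → Ssum A C F π = 0) ∧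
      (∀ π : Word n, IsRanking A π →
        Ssum A C F π = ((C.card.factorial / A.card.factorial : ℕ) : ℝ) * F π) := by
  classical
  intro m
  induction m with
  | zero =>
    intro C hCm hAC
    exact absurd (le_trans (Finset.card_le_card hAC) hCm) (by omega)
  | succ m ih =>
    intro C hCm hAC
    by_cases hCA : C = A
    · subst hCA
      constructor
      · intro π hπnd hπlen
        have he : Ssum C C F π = ∑ τ ∈ rankings n C, (if π <+ τ then F τ else 0) := by
          simp only [Ssum]
          refine Finset.sum_congr rfl ?_
          intro τ hτ
          obtain ⟨h1, h2⟩ := mem_rankings.mp hτ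
          rw [restrict_eq_self (fun a ha => by rw [← h2]; exact List.mem_toFinset.mpr ha)]
        rw [he]
        exact HH π hπnd hπlen
      · intro π hπ
        have hmem : π ∈ rankings n C := mem_rankings.mpr hπ
        simp only [Ssum]
        rw [Finset.sum_eq_single_of_mem π hmem]
        · rw [if_pos (List.Sublist.refl π),
            restrict_eq_self (fun a ha => by rw [← hπ.2]; exact List.mem_toFinset.mpr ha),
            Nat.div_self (Nat.factorial_pos _)]
          simp
        · intro τ hτ hne
          refine if_neg (fun hsub => hne ?_)
          refine (hsub.eq_of_length ?_).symm
          rw [length_of_isRanking hπ, length_of_isRanking (mem_rankings.mp hτ)]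
    · have hssub : A ⊂ C := Finset.ssubset_iff_subset_ne.mpr ⟨hAC, fun h => hCA h.symm⟩
      obtain ⟨x, hxC, hxA⟩ := Finset.exists_of_ssubset hssub
      have hAe : A ⊆ C.erase x := Finset.subset_erase.mpr ⟨hAC, hxA⟩
      have hCpos : 0 < C.card := Finset.card_pos.mpr ⟨x, hxC⟩
      have hcard : (C.erase x).card ≤ m := by
        rw [Finset.card_erase_of_mem hxC]
        omega
      have IH := ih (C.erase x) hcard hAe
      constructor
      · intro π hπnd hπlen
        by_cases hπC : π.toFinset ⊆ C
        · by_cases hπA : π.toFinset ⊆ A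
          · have hxπ : x ∉ π := fun h => hxA (hπA (List.mem_toFinset.mpr h))
            rw [erase_step F hxC hxA hxπ, IH.1 π hπnd hπlen, mul_zero]
          · obtain ⟨z, hzπ, hzA⟩ : ∃ z ∈ π, z ∉ A := by
              by_contra hc
              push_neg at hc
              exact hπA (fun a ha => hc a (List.mem_toFinset.mp ha))
            have hzC : z ∈ C := hπC (List.mem_toFinset.mpr hzπ)
            obtain ⟨π₁, π₂, rfl⟩ := List.append_of_mem hzπ
            have hAez : A ⊆ C.erase z := Finset.subset_erase.mpr ⟨hAC, hzA⟩
            have hcz : (C.erase z).card ≤ m := by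
              rw [Finset.card_erase_of_mem hzC]
              omega
            have IHz := ih (C.erase z) hcz hAez
            have hnd12 : (π₁ ++ π₂).Nodup :=
              (List.nodup_cons.mp (List.nodup_middle.mp hπnd)).2
            have hlen12 : (π₁ ++ π₂).length < A.card := by
              simp only [List.length_append, List.length_cons] at hπlen ⊢
              omega
            rw [split_step F hzC hzA hπnd, IHz.1 (π₁ ++ π₂) hnd12 hlen12, zero_add]
            refine Finset.sum_eq_zero ?_
            intro y hy
            have hynd : (π₁ ++ y :: π₂).Nodup := by
              rw [List.nodup_middle, List.nodup_cons]
              refine ⟨fun h => ?_, hnd12⟩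
              exact (Finset.mem_sdiff.mp hy).2 (List.mem_toFinset.mpr h)
            have hylen : (π₁ ++ y :: π₂).length < A.card := by
              simp only [List.length_append, List.length_cons] at hπlen ⊢
              omega
            exact IHz.1 _ hynd hylen
        · simp only [Ssum]
          refine Finset.sum_eq_zero ?_
          intro ρ hρ
          refine if_neg (fun hsub => hπC ?_)
          intro a ha
          rw [← (mem_rankings.mp hρ).2]
          exact List.mem_toFinset.mpr (hsub.subset (List.mem_toFinset.mp ha))
      · intro π hπ
        have hxπ : x ∉ π := fun h => hxA (by rw [← hπ.2]; exact List.mem_toFinset.mpr h)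
        rw [erase_step F hxC hxA hxπ, IH.2 π hπ, ← mul_assoc]
        congr 1
        have hkc : A.card ≤ C.card - 1 := by
          have := Finset.card_lt_card hssub
          omega
        have hnat : C.card * ((C.card - 1).factorial / A.card.factorial)
            = C.card.factorial / A.card.factorial := by
          rw [← Nat.mul_div_assoc _ (Nat.factorial_dvd_factorial hkc),
            ← Nat.mul_factorial_pred hCpos.ne']
        rw [Finset.card_erase_of_mem hxC]
        calc (C.card : ℝ) * (((C.card - 1).factorial / A.card.factorial : ℕ) : ℝ)
            = ((C.card * ((C.card - 1).factorial / A.card.factorial) : ℕ) : ℝ) := by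
              push_cast
              ring
          _ = _ := by rw [hnat]

lemma main_induction (A : Finset (Fin n)) (hA2 : 2 ≤ A.card) (F : Word n → ℝ)
    (HH : ∀ ν : Word n, ν.Nodup → ν.length < A.card →
      ∑ τ ∈ rankings n A, (if ν <+ τ then F τ else 0) = 0) :
    ∀ (C : Finset (Fin n)), A ⊆ C →
      (∀ π : Word n, π.Nodup → π.length < A.card → Ssum A C F π = 0) ∧
      (∀ π : Word n, IsRanking A π →
        Ssum A C F π = ((C.card.factorial / A.card.factorial : ℕ) : ℝ) * F π) :=
  fun C hAC => main_aux A hA2 F HH C.card C le_rfl hAC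

lemma HH_of_MemH {A : Finset (Fin n)} {F : Word n → ℝ} (hF : MemH A F) (hA : 2 ≤ A.card) :
    ∀ ν : Word n, ν.Nodup → ν.length < A.card →
      ∑ τ ∈ rankings n A, (if ν <+ τ then F τ else 0) = 0 := by
  classical
  intro ν hnd hlen
  by_cases hνA : ν.toFinset ⊆ A
  · by_cases h2 : 2 ≤ ν.toFinset.card
    · have hss : ν.toFinset ⊂ A := by
        refine Finset.ssubset_iff_subset_ne.mpr ⟨hνA, fun h => ?_⟩
        have hc := List.toFinset_card_of_nodup hnd
        rw [h] at hc
        omega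
      have hmarg := congrFun (hF.2.1 ν.toFinset hss h2) ν
      rw [marg] at hmarg
      simp only [if_pos (show IsRanking ν.toFinset ν from ⟨hnd, rfl⟩), Pi.zero_apply] at hmarg
      rw [← sum_allWords_eq_rankings (fun τ => if ν <+ τ then F τ else 0) ?_]
      · exact hmarg
      · intro w _ hwn
        by_cases hf : F w = 0
        · simp [hf]
        · exact absurd (mem_rankings.mpr (hF.1 w hf)) hwn
    · have hc := List.toFinset_card_of_nodup hnd
      have hlen1 : ν.length ≤ 1 := by omega
      rcases ν with _ | ⟨a, l⟩
      · have hone : ∀ τ ∈ rankings n A, (if ([] : Word n) <+ τ then F τ else 0) = F τ :=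
          fun τ _ => if_pos (List.nil_sublist τ)
        rw [Finset.sum_congr rfl hone]
        exact hF.2.2 hA
      · have hl : l = [] := by
          rcases l with _ | ⟨b, l'⟩
          · rfl
          · simp at hlen1
        subst hl
        have haA : a ∈ A := hνA (by simp)
        have hone : ∀ τ ∈ rankings n A, (if [a] <+ τ then F τ else 0) = F τ := by
          intro τ hτ
          refine if_pos (List.singleton_sublist.mpr ?_)
          rw [← List.mem_toFinset, (mem_rankings.mp hτ).2]
          exact haA
        rw [Finset.sum_congr rfl hone]
        exact hF.2.2 hA
  · refine Finset.sum_eq_zero ?_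
    intro τ hτ
    refine if_neg (fun hsub => hνA ?_)
    intro a ha
    rw [← (mem_rankings.mp hτ).2]
    exact List.mem_toFinset.mpr (hsub.subset (List.mem_toFinset.mp ha))

lemma synth'_eval {A : Finset (Fin n)} {F : Word n → ℝ} (hF : MemL A F)
    {σ : Word n} (hσ : IsRanking (Finset.univ : Finset (Fin n)) σ) :
    synth' Finset.univ F σ
      = ((A.card.factorial : ℝ) / (n.factorial : ℝ)) * F (restrictWord σ A) := by
  classical
  simp only [synth']
  rw [if_pos hσ]
  have hsub : A ⊆ σ.toFinset := by rw [hσ.2]; exact Finset.subset_univ A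
  have hmem : restrictWord σ A ∈ allWords n := mem_allWords.mpr (restrict_nodup hσ.1 A)
  rw [Finset.sum_eq_single_of_mem _ hmem]
  · rw [if_pos (restrict_sublist σ A), restrict_length hσ.1 hsub,
      Finset.card_univ, Fintype.card_fin]
  · intro π _ hne
    by_cases hs : π <+ σ
    · rw [if_pos hs]
      by_cases hf : F π = 0
      · rw [hf, mul_zero]
      · exact (hne (sublist_eq_restrict (hF π hf) hσ.1 hsub hs)).elim
    · rw [if_neg hs]

lemma parts {A : Finset (Fin n)} (hA : 2 ≤ A.card) {F : Word n → ℝ} (hF : MemH A F) :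
    marg A (synth' Finset.univ F) = F ∧
    (∀ B : Finset (Fin n), 2 ≤ B.card → B.card ≤ A.card - 1 →
      marg B (synth' Finset.univ F) = 0) ∧
    (∑ σ ∈ rankings n Finset.univ, synth' Finset.univ F σ = 0) := by
  classical
  have HH := HH_of_MemH hF hA
  have main := main_induction A hA F HH Finset.univ (Finset.subset_univ A)
  have hcu : (Finset.univ : Finset (Fin n)).card = n := by
    rw [Finset.card_univ, Fintype.card_fin]
  have hkn : A.card ≤ n := by
    have := Finset.card_le_card (Finset.subset_univ A)
    omega
  have hvanish : ∀ (π : Word n), ∀ w ∈ allWords n, w ∉ rankings n Finset.univ →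
      (if π <+ w then synth' Finset.univ F w else 0) = 0 := by
    intro π w _ hwn
    have hz : synth' Finset.univ F w = 0 := by
      simp only [synth']
      rw [if_neg (fun hi => hwn (mem_rankings.mpr hi))]
    rw [hz]
    simp
  have key : ∀ π : Word n,
      (∑ σ ∈ allWords n, if π <+ σ then synth' Finset.univ F σ else 0)
        = ((A.card.factorial : ℝ) / (n.factorial : ℝ)) * Ssum A Finset.univ F π := by
    intro π
    rw [sum_allWords_eq_rankings (fun σ => if π <+ σ then synth' Finset.univ F σ else 0)
      (hvanish π), Ssum, Finset.mul_sum]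
    refine Finset.sum_congr rfl ?_
    intro σ hσ
    rw [synth'_eval hF.1 (mem_rankings.mp hσ)]
    split_ifs with hc
    · rfl
    · rw [mul_zero]
  have hconst : (A.card.factorial : ℝ) / (n.factorial : ℝ)
      * (((Finset.univ : Finset (Fin n)).card.factorial / A.card.factorial : ℕ) : ℝ) = 1 := by
    rw [hcu, Nat.cast_div (Nat.factorial_dvd_factorial hkn)
      (by exact_mod_cast (Nat.factorial_pos A.card).ne')]
    have h1 : (A.card.factorial : ℝ) ≠ 0 := by exact_mod_cast (Nat.factorial_pos _).ne'
    have h2 : (n.factorial : ℝ) ≠ 0 := by exact_mod_cast (Nat.factorial_pos _).ne'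
    field_simp
  refine ⟨?_, ?_, ?_⟩
  · funext π
    simp only [marg]
    by_cases hπ : IsRanking A π
    · rw [if_pos hπ, key π, main.2 π hπ, ← mul_assoc, hconst, one_mul]
    · rw [if_neg hπ]
      rcases eq_or_ne (F π) 0 with h | h
      · exact h.symm
      · exact absurd (hF.1 π h) hπ
  · intro B hB2 hBk
    funext π
    simp only [marg, Pi.zero_apply]
    by_cases hπ : IsRanking B π
    · rw [if_pos hπ, key π, main.1 π hπ.1 ?_, mul_zero]
      rw [length_of_isRanking hπ]
      omega
    · rw [if_neg hπ]
  · have hone : ∀ σ ∈ rankings n Finset.univ,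
        synth' Finset.univ F σ = if ([] : Word n) <+ σ then synth' Finset.univ F σ else 0 :=
      fun σ _ => (if_pos (List.nil_sublist σ)).symm
    rw [Finset.sum_congr rfl hone,
      ← sum_allWords_eq_rankings (fun σ => if ([] : Word n) <+ σ then synth' Finset.univ F σ else 0) (hvanish []),
      key [], main.1 [] List.nodup_nil (by simp only [List.length_nil]; omega), mul_zero]

end SynthAux

/-- **The alternative embedding sends localization spaces into the wavelet subspaces of
`L(Γ([n]))`:** for `F ∈ H_A` with `|A| = k ≥ 2`: (i) `M_A(φ'_{[n]} F) = F`;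
(ii) `M_B(φ'_{[n]} F) = 0` for `2 ≤ |B| ≤ k−1`; (iii) `Σ_{σ∈Γ([n])} φ'_{[n]}F(σ) = 0`.
In particular `φ'_{[n]}` is injective on `H_A`. -/
theorem synth'_mem_wavelet_subspace {n : ℕ} (hn : 2 ≤ n)
    (A : Finset (Fin n)) (hA : 2 ≤ A.card)
    (F : Word n → ℝ) (hF : MemH A F) :
    marg A (synth' Finset.univ F) = F ∧
    (∀ B : Finset (Fin n), 2 ≤ B.card → B.card ≤ A.card - 1 →
      marg B (synth' Finset.univ F) = 0) ∧
    (∑ σ ∈ rankings n Finset.univ, synth' Finset.univ F σ = 0) ∧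
    (∀ G : Word n → ℝ, MemH A G → synth' Finset.univ F = synth' Finset.univ G → F = G) := by
  obtain ⟨h1, h2, h3⟩ := SynthAux.parts hA hF
  refine ⟨h1, h2, h3, ?_⟩
  intro G hG hEq
  rw [← h1, hEq, (SynthAux.parts hA hG).1]
end
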